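/- arXiv:1901.08156 — 6 statements merged into one kernel-verified Lean document; each statement's English description precedes it below -/
import Mathlib

section
/- Let w_1 ≥ w_2 ≥ w_3 ≥ w_4 be real numbers and let p(x) = (x - w_1)(x - w_2)(x - w_3)(x - w_4). Then p has a hyperbolic antiderivative if and only if wᵀ A w ≥ 0, where w = (w_1, w_2, w_3, w_4) and A is the symmetric 4×4 matrix with rows (6, -5, -5, 4), (-5, 0, 10, -5), (-5, 10, 0, -5), (4, -5, -5, 6). -/
open Polynomial

/-- A real polynomial is hyperbolic if all of its complex roots are real. -/
def Hyperbolic (p : Polynomial ℝ) : Prop :=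
  ∀ z ∈ (p.map (algebraMap ℝ ℂ)).roots, z.im = 0



lemma evalprod_pos {S : Multiset ℝ} {x : ℝ} (h : ∀ r ∈ S, r < x) :
    0 < Polynomial.eval x (S.map (fun a => X - C a)).prod := by
  induction S using Multiset.induction_on with
  | empty => simp
  | cons a T ih =>
    rw [Multiset.map_cons, Multiset.prod_cons, eval_mul]
    have ha : a < x := h a (Multiset.mem_cons_self a T)
    have := ih (fun r hr => h r (Multiset.mem_cons_of_mem hr))
    have : (0:ℝ) < eval x (X - C a) := by simp [sub_pos, ha]
    nlinarith [ih (fun r hr => h r (Multiset.mem_cons_of_mem hr))]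

lemma evalderiv_pos {S : Multiset ℝ} {x : ℝ} (hS : S ≠ 0) (h : ∀ r ∈ S, r < x) :
    0 < Polynomial.eval x (Polynomial.derivative (S.map (fun a => X - C a)).prod) := by
  induction S using Multiset.induction_on with
  | empty => exact absurd rfl hS
  | cons a T ih =>
    rw [Multiset.map_cons, Multiset.prod_cons, derivative_mul, eval_add, eval_mul, eval_mul]
    have ha : a < x := h a (Multiset.mem_cons_self a T)
    have hT : ∀ r ∈ T, r < x := fun r hr => h r (Multiset.mem_cons_of_mem hr)
    have h1 : (0:ℝ) < eval x (T.map (fun a => X - C a)).prod := evalprod_pos hT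
    have h2 : eval x (derivative (X - C a)) = 1 := by simp
    rcases eq_or_ne T 0 with rfl | hT0
    · simp
    · have h3 := ih hT0 hT
      rw [h2, one_mul]
      have : (0:ℝ) < eval x (X - C a) := by simp [sub_pos, ha]
      nlinarith

lemma evalprod_sign {S : Multiset ℝ} {x : ℝ} (h : ∀ r ∈ S, x < r) :
    0 < (-1 : ℝ)^(Multiset.card S) * Polynomial.eval x (S.map (fun a => X - C a)).prod := by
  induction S using Multiset.induction_on with
  | empty => simp
  | cons a T ih =>
    rw [Multiset.map_cons, Multiset.prod_cons, eval_mul, Multiset.card_cons]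
    have ha : x < a := h a (Multiset.mem_cons_self a T)
    have h1 := ih (fun r hr => h r (Multiset.mem_cons_of_mem hr))
    have hxa : eval x (X - C a) = x - a := by simp
    rw [hxa, pow_succ]
    nlinarith

lemma evalderiv_sign {S : Multiset ℝ} {x : ℝ} (hS : S ≠ 0) (h : ∀ r ∈ S, x < r) :
    0 < (-1 : ℝ)^(Multiset.card S + 1) *
      Polynomial.eval x (Polynomial.derivative (S.map (fun a => X - C a)).prod) := by
  induction S using Multiset.induction_on with
  | empty => exact absurd rfl hS
  | cons a T ih =>
    rw [Multiset.map_cons, Multiset.prod_cons, derivative_mul, eval_add, eval_mul, eval_mul,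
      Multiset.card_cons]
    have ha : x < a := h a (Multiset.mem_cons_self a T)
    have hT : ∀ r ∈ T, x < r := fun r hr => h r (Multiset.mem_cons_of_mem hr)
    have h1 := evalprod_sign hT
    have h2 : eval x (derivative (X - C a)) = 1 := by simp
    have hxa : eval x (X - C a) = x - a := by simp
    rcases eq_or_ne T 0 with rfl | hT0
    · simp
    · have h3 := ih hT0 hT
      rw [h2, one_mul, hxa]
      rw [pow_succ, pow_succ]
      rw [pow_succ] at h3
      nlinarith

lemma hyperbolic_of_card {P : Polynomial ℝ} (h : Multiset.card P.roots = P.natDegree) :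
    Hyperbolic P := by
  intro z hz
  by_cases hP : P = 0
  · simp [hP] at hz
  rw [← roots_map_of_injective_of_card_eq_natDegree (algebraMap ℝ ℂ).injective h] at hz
  obtain ⟨x, -, rfl⟩ := Multiset.mem_map.mp hz
  simp

lemma card_of_hyperbolic {P : Polynomial ℝ} (hP : P ≠ 0) (h : Hyperbolic P) :
    Multiset.card P.roots = P.natDegree := by
  classical
  have hf : Function.Injective (algebraMap ℝ ℂ) := (algebraMap ℝ ℂ).injective
  have hmap : P.map (algebraMap ℝ ℂ) ≠ 0 := (Polynomial.map_ne_zero_iff hf).mpr hP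
  have hsp : Splits (P.map (algebraMap ℝ ℂ)) := IsAlgClosed.splits _
  have hcard : Multiset.card (P.map (algebraMap ℝ ℂ)).roots = P.natDegree :=
    by rw [← hsp.natDegree_eq_card_roots, natDegree_map]
  have hle : (P.map (algebraMap ℝ ℂ)).roots ≤ P.roots.map (algebraMap ℝ ℂ) := by
    rw [Multiset.le_iff_count]
    intro z
    by_cases hz : z ∈ (P.map (algebraMap ℝ ℂ)).roots
    · have hzim : z.im = 0 := h z hz
      have hzre : (algebraMap ℝ ℂ) z.re = z := by
        apply Complex.ext <;> simp [hzim]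
      rw [count_roots, ← hzre, ← eq_rootMultiplicity_map hf, ← count_roots P,
        ← Multiset.count_map_eq_count' _ _ hf]
    · rw [Multiset.count_eq_zero_of_notMem hz]
      exact Nat.zero_le _
  have := Multiset.card_le_card hle
  rw [hcard, Multiset.card_map] at this
  exact le_antisymm (P.card_roots' ) this

lemma eval_mono {P q : Polynomial ℝ} (h : derivative P = q) {u v : ℝ} (huv : u ≤ v)
    (hq : ∀ x, u ≤ x → x ≤ v → 0 ≤ q.eval x) : P.eval u ≤ P.eval v := by
  have hmono : MonotoneOn (fun x => P.eval x) (Set.Icc u v) := by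
    apply monotoneOn_of_deriv_nonneg (convex_Icc u v)
      (P.continuous.continuousOn)
    · intro x _
      exact P.differentiable.differentiableAt.differentiableWithinAt
    · intro x hx
      rw [Polynomial.deriv, h]
      rw [interior_Icc] at hx
      exact hq x hx.1.le hx.2.le
  exact hmono (Set.left_mem_Icc.mpr huv) (Set.right_mem_Icc.mpr huv) huv

lemma eval_anti {P q : Polynomial ℝ} (h : derivative P = q) {u v : ℝ} (huv : u ≤ v)
    (hq : ∀ x, u ≤ x → x ≤ v → q.eval x ≤ 0) : P.eval v ≤ P.eval u := by
  have := eval_mono (P := -P) (q := -q) (by rw [derivative_neg, h]) huv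
    (fun x h1 h2 => by simpa using hq x h1 h2)
  simpa using this

lemma mult_key {P : Polynomial ℝ} (hP' : derivative P ≠ 0) {t : ℝ} (ht : P.IsRoot t) {k : ℕ}
    (hd : (X - C t) ^ k ∣ derivative P) : k + 1 ≤ P.rootMultiplicity t := by
  have hP : P ≠ 0 := by rintro rfl; simp at hP'; 
  have h1 : k ≤ (derivative P).rootMultiplicity t := (le_rootMultiplicity_iff hP').mpr hd
  rw [derivative_rootMultiplicity_of_root ht] at h1
  have h2 : 0 < P.rootMultiplicity t := (rootMultiplicity_pos hP).mpr ht
  omega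

lemma deg_facts {P pp : Polynomial ℝ} (hP : derivative P = pp) (hm : pp.Monic)
    (h4 : pp.natDegree = 4) : P.natDegree = 5 ∧ P.coeff 5 = 1/5 := by
  have hc : ∀ n : ℕ, pp.coeff n = P.coeff (n+1) * (n+1) := by
    intro n; rw [← hP, coeff_derivative]
  have hc5 : P.coeff 5 = 1/5 := by
    have := hc 4
    rw [show pp.coeff 4 = 1 from h4 ▸ hm.coeff_natDegree] at this
    push_cast at this
    linarith
  refine ⟨le_antisymm ?_ (le_natDegree_of_ne_zero (by rw [hc5]; norm_num)), hc5⟩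
  by_contra hlt
  push_neg at hlt
  have h6 : 6 ≤ P.natDegree := hlt
  have hne : P.coeff P.natDegree ≠ 0 := by
    refine leadingCoeff_ne_zero.mpr ?_ 
    intro h0; rw [h0] at hlt; simp at hlt
  have h0 : pp.coeff (P.natDegree - 1) = 0 := by
    apply coeff_eq_zero_of_natDegree_lt; omega
  rw [hc (P.natDegree - 1), show P.natDegree - 1 + 1 = P.natDegree by omega] at h0
  rcases mul_eq_zero.mp h0 with h | h
  · exact hne h
  · have : ((P.natDegree - 1 : ℕ) : ℝ) + 1 > 0 := by positivity
    linarith [this.ne' h]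

noncomputable def P0 (a b c d : ℝ) : Polynomial ℝ :=
  C (5⁻¹ : ℝ) * X ^ 5 - C ((a + b + c + d) / 4) * X ^ 4
    + C ((a * b + a * c + a * d + b * c + b * d + c * d) / 3) * X ^ 3
    - C ((a * b * c + a * b * d + a * c * d + b * c * d) / 2) * X ^ 2
    + C (a * b * c * d) * X

lemma P0_deriv (a b c d : ℝ) :
    derivative (P0 a b c d) = (X - C a) * (X - C b) * (X - C c) * (X - C d) := by
  apply Polynomial.funext
  intro x
  simp only [P0, derivative_add, derivative_sub, derivative_mul, derivative_C, derivative_X_pow,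
    derivative_X, eval_add, eval_sub, eval_mul, eval_pow, eval_C, eval_X, eval_natCast,
    zero_mul, add_zero, zero_add, mul_one, mul_zero]
  push_cast
  ring

lemma P0_eval (a b c d x : ℝ) :
    (P0 a b c d).eval x = x^5/5 - (a+b+c+d)/4*x^4 + (a*b+a*c+a*d+b*c+b*d+c*d)/3*x^3
      - (a*b*c+a*b*d+a*c*d+b*c*d)/2*x^2 + a*b*c*d*x := by
  simp [P0]
  ring

lemma P0_identity (a b c d : ℝ) :
    (P0 a b c d).eval d - (P0 a b c d).eval a =
      (a - d)^3 * (6*a^2 + 6*d^2 - 10*a*b - 10*a*c + 8*a*d + 20*b*c - 10*b*d - 10*c*d) / 120 := by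
  rw [P0_eval, P0_eval]
  ring

set_option maxHeartbeats 1000000 in
lemma count_le_mult {P p : Polynomial ℝ} (hPd : derivative P = p) (hdP : derivative P ≠ 0)
    {a b c d : ℝ} (hp : p = (X - C a) * (X - C b) * (X - C c) * (X - C d))
    {a1 a2 a3 a4 a5 : ℝ}
    (ha1 : P.eval a1 = 0) (ha2 : P.eval a2 = 0) (ha3 : P.eval a3 = 0)
    (ha4 : P.eval a4 = 0) (ha5 : P.eval a5 = 0)
    (c1 : a1 ≤ d) (c2 : d ≤ a2) (c3 : a2 ≤ c) (c4 : c ≤ a3) (c5 : a3 ≤ b)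
    (c6 : b ≤ a4) (c7 : a4 ≤ a) (c8 : a ≤ a5) :
    ({a1, a2, a3, a4, a5} : Multiset ℝ) ≤ P.roots := by
  classical
  rw [Multiset.le_iff_count]
  intro t
  rw [count_roots]
  simp only [Multiset.insert_eq_cons, Multiset.count_cons, Multiset.count_singleton]
  by_cases e1 : t = a1 <;> by_cases e2 : t = a2 <;> by_cases e3 : t = a3 <;>
    by_cases e4 : t = a4 <;> by_cases e5 : t = a5
  · rw [if_pos e1, if_pos e2, if_pos e3, if_pos e4, if_pos e5]
    exact le_trans (by norm_num) (mult_key (k := 4) hdP (by rw [Polynomial.IsRoot.def, e1]; exact ha1) (by rw [hPd, hp, show d = t by linarith, show c = t by linarith, show b = t by linarith, show a = t by linarith]; exact ⟨1, by ring⟩))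
  · rw [if_pos e1, if_pos e2, if_pos e3, if_pos e4, if_neg e5]
    exact le_trans (by norm_num) (mult_key (k := 3) hdP (by rw [Polynomial.IsRoot.def, e1]; exact ha1) (by rw [hPd, hp, show d = t by linarith, show c = t by linarith, show b = t by linarith]; exact ⟨(X - C a), by ring⟩))
  · exact absurd (show t = a4 by linarith) e4
  · rw [if_pos e1, if_pos e2, if_pos e3, if_neg e4, if_neg e5]
    exact le_trans (by norm_num) (mult_key (k := 2) hdP (by rw [Polynomial.IsRoot.def, e1]; exact ha1) (by rw [hPd, hp, show d = t by linarith, show c = t by linarith]; exact ⟨(X - C a) * (X - C b), by ring⟩))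
  · exact absurd (show t = a3 by linarith) e3
  · exact absurd (show t = a3 by linarith) e3
  · exact absurd (show t = a3 by linarith) e3
  · rw [if_pos e1, if_pos e2, if_neg e3, if_neg e4, if_neg e5]
    exact le_trans (by norm_num) (mult_key (k := 1) hdP (by rw [Polynomial.IsRoot.def, e1]; exact ha1) (by rw [hPd, hp, show d = t by linarith]; exact ⟨(X - C a) * (X - C b) * (X - C c), by ring⟩))
  · exact absurd (show t = a2 by linarith) e2
  · exact absurd (show t = a2 by linarith) e2
  · exact absurd (show t = a2 by linarith) e2
  · exact absurd (show t = a2 by linarith) e2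
  · exact absurd (show t = a2 by linarith) e2
  · exact absurd (show t = a2 by linarith) e2
  · exact absurd (show t = a2 by linarith) e2
  · rw [if_pos e1, if_neg e2, if_neg e3, if_neg e4, if_neg e5]
    exact le_trans (by norm_num) (mult_key (k := 0) hdP (by rw [Polynomial.IsRoot.def, e1]; exact ha1) (by rw [pow_zero]; exact one_dvd _))
  · rw [if_neg e1, if_pos e2, if_pos e3, if_pos e4, if_pos e5]
    exact le_trans (by norm_num) (mult_key (k := 3) hdP (by rw [Polynomial.IsRoot.def, e2]; exact ha2) (by rw [hPd, hp, show c = t by linarith, show b = t by linarith, show a = t by linarith]; exact ⟨(X - C d), by ring⟩))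
  · rw [if_neg e1, if_pos e2, if_pos e3, if_pos e4, if_neg e5]
    exact le_trans (by norm_num) (mult_key (k := 2) hdP (by rw [Polynomial.IsRoot.def, e2]; exact ha2) (by rw [hPd, hp, show c = t by linarith, show b = t by linarith]; exact ⟨(X - C a) * (X - C d), by ring⟩))
  · exact absurd (show t = a4 by linarith) e4
  · rw [if_neg e1, if_pos e2, if_pos e3, if_neg e4, if_neg e5]
    exact le_trans (by norm_num) (mult_key (k := 1) hdP (by rw [Polynomial.IsRoot.def, e2]; exact ha2) (by rw [hPd, hp, show c = t by linarith]; exact ⟨(X - C a) * (X - C b) * (X - C d), by ring⟩))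
  · exact absurd (show t = a3 by linarith) e3
  · exact absurd (show t = a3 by linarith) e3
  · exact absurd (show t = a3 by linarith) e3
  · rw [if_neg e1, if_pos e2, if_neg e3, if_neg e4, if_neg e5]
    exact le_trans (by norm_num) (mult_key (k := 0) hdP (by rw [Polynomial.IsRoot.def, e2]; exact ha2) (by rw [pow_zero]; exact one_dvd _))
  · rw [if_neg e1, if_neg e2, if_pos e3, if_pos e4, if_pos e5]
    exact le_trans (by norm_num) (mult_key (k := 2) hdP (by rw [Polynomial.IsRoot.def, e3]; exact ha3) (by rw [hPd, hp, show b = t by linarith, show a = t by linarith]; exact ⟨(X - C c) * (X - C d), by ring⟩))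
  · rw [if_neg e1, if_neg e2, if_pos e3, if_pos e4, if_neg e5]
    exact le_trans (by norm_num) (mult_key (k := 1) hdP (by rw [Polynomial.IsRoot.def, e3]; exact ha3) (by rw [hPd, hp, show b = t by linarith]; exact ⟨(X - C a) * (X - C c) * (X - C d), by ring⟩))
  · exact absurd (show t = a4 by linarith) e4
  · rw [if_neg e1, if_neg e2, if_pos e3, if_neg e4, if_neg e5]
    exact le_trans (by norm_num) (mult_key (k := 0) hdP (by rw [Polynomial.IsRoot.def, e3]; exact ha3) (by rw [pow_zero]; exact one_dvd _))
  · rw [if_neg e1, if_neg e2, if_neg e3, if_pos e4, if_pos e5]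
    exact le_trans (by norm_num) (mult_key (k := 1) hdP (by rw [Polynomial.IsRoot.def, e4]; exact ha4) (by rw [hPd, hp, show a = t by linarith]; exact ⟨(X - C b) * (X - C c) * (X - C d), by ring⟩))
  · rw [if_neg e1, if_neg e2, if_neg e3, if_pos e4, if_neg e5]
    exact le_trans (by norm_num) (mult_key (k := 0) hdP (by rw [Polynomial.IsRoot.def, e4]; exact ha4) (by rw [pow_zero]; exact one_dvd _))
  · rw [if_neg e1, if_neg e2, if_neg e3, if_neg e4, if_pos e5]
    exact le_trans (by norm_num) (mult_key (k := 0) hdP (by rw [Polynomial.IsRoot.def, e5]; exact ha5) (by rw [pow_zero]; exact one_dvd _))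
  · rw [if_neg e1, if_neg e2, if_neg e3, if_neg e4, if_neg e5]; simp

lemma main_equiv (a b c d : ℝ) (hba : b ≤ a) (hcb : c ≤ b) (hdc : d ≤ c)
    (p : Polynomial ℝ) (hp : p = (X - C a) * (X - C b) * (X - C c) * (X - C d)) :
    (∃ P : Polynomial ℝ, derivative P = p ∧ Hyperbolic P) ↔
      (P0 a b c d).eval a ≤ (P0 a b c d).eval d := by
  classical
  have m1 : (X - C a).Monic := monic_X_sub_C a
  have m2 : (X - C b).Monic := monic_X_sub_C b
  have m3 : (X - C c).Monic := monic_X_sub_C c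
  have m4 : (X - C d).Monic := monic_X_sub_C d
  have hpm : p.Monic := by rw [hp]; exact ((m1.mul m2).mul m3).mul m4
  have hp0 : p ≠ 0 := hpm.ne_zero
  have hp4 : p.natDegree = 4 := by
    rw [hp, Monic.natDegree_mul ((m1.mul m2).mul m3) m4,
      Monic.natDegree_mul (m1.mul m2) m3, Monic.natDegree_mul m1 m2,
      natDegree_X_sub_C, natDegree_X_sub_C, natDegree_X_sub_C, natDegree_X_sub_C]
  have hsign_hi : ∀ x, a ≤ x → 0 ≤ p.eval x := by
    intro x hx; simp only [hp, eval_mul, eval_sub, eval_X, eval_C]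
    have h1 : 0 ≤ x - a := by linarith
    have h2 : 0 ≤ x - b := by linarith
    have h3 : 0 ≤ x - c := by linarith
    have h4 : 0 ≤ x - d := by linarith
    positivity
  have hsign_lo : ∀ x, x ≤ d → 0 ≤ p.eval x := by
    intro x hx; simp only [hp, eval_mul, eval_sub, eval_X, eval_C]
    have h1 : x - a ≤ 0 := by linarith
    have h2 : x - b ≤ 0 := by linarith
    have h3 : x - c ≤ 0 := by linarith
    have h4 : x - d ≤ 0 := by linarith
    nlinarith [mul_nonneg (mul_nonneg (by linarith : (0:ℝ) ≤ a - x) (by linarith : (0:ℝ) ≤ b - x)) (mul_nonneg (by linarith : (0:ℝ) ≤ c - x) (by linarith : (0:ℝ) ≤ d - x))]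
  have hsign_ba : ∀ x, b ≤ x → x ≤ a → p.eval x ≤ 0 := by
    intro x h1 h2; simp only [hp, eval_mul, eval_sub, eval_X, eval_C]
    have g1 : x - a ≤ 0 := by linarith
    have g2 : 0 ≤ x - b := by linarith
    have g3 : 0 ≤ x - c := by linarith
    have g4 : 0 ≤ x - d := by linarith
    nlinarith [mul_nonneg (mul_nonneg (mul_nonneg (by linarith : (0:ℝ) ≤ a - x) g2) g3) g4]
  have hsign_cb : ∀ x, c ≤ x → x ≤ b → 0 ≤ p.eval x := by
    intro x h1 h2; simp only [hp, eval_mul, eval_sub, eval_X, eval_C]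
    have g1 : x - a ≤ 0 := by linarith
    have g2 : x - b ≤ 0 := by linarith
    have g3 : 0 ≤ x - c := by linarith
    have g4 : 0 ≤ x - d := by linarith
    nlinarith [mul_nonneg (mul_nonneg (mul_nonneg (by linarith : (0:ℝ) ≤ a - x) (by linarith : (0:ℝ) ≤ b - x)) g3) g4]
  have hsign_dc : ∀ x, d ≤ x → x ≤ c → p.eval x ≤ 0 := by
    intro x h1 h2; simp only [hp, eval_mul, eval_sub, eval_X, eval_C]
    have g1 : x - a ≤ 0 := by linarith
    have g2 : x - b ≤ 0 := by linarith
    have g3 : x - c ≤ 0 := by linarith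
    have g4 : 0 ≤ x - d := by linarith
    nlinarith [mul_nonneg (mul_nonneg (mul_nonneg (by linarith : (0:ℝ) ≤ a - x) (by linarith : (0:ℝ) ≤ b - x)) (by linarith : (0:ℝ) ≤ c - x)) g4]
  have hP0p : derivative (P0 a b c d) = p := by rw [P0_deriv, hp]
  constructor
  · rintro ⟨P, hPd, hPh⟩
    obtain ⟨hdeg5, hc5⟩ := deg_facts hPd hpm hp4
    have hP0 : P ≠ 0 := by
      rintro rfl; rw [derivative_zero] at hPd; exact hp0 hPd.symm
    have hlead : P.leadingCoeff = 1/5 := by rw [leadingCoeff, hdeg5, hc5]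
    have hcard := card_of_hyperbolic hP0 hPh
    have hcard5 : Multiset.card P.roots = 5 := by rw [hcard, hdeg5]
    have hSne : P.roots ≠ 0 := by
      intro h0; rw [h0] at hcard5; simp at hcard5
    have hsp : Splits P := splits_iff_card_roots.mpr hcard
    have hfact := hsp.eq_prod_roots
    have hder : p = C P.leadingCoeff *
        derivative ((P.roots.map (fun r => X - C r)).prod) := by
      rw [← hPd]; conv_lhs => rw [hfact]
      rw [derivative_mul, derivative_C, zero_mul, zero_add]
    have hCa : P.eval a ≤ 0 := by
      by_contra hpos
      push_neg at hpos
      have hroots_lt : ∀ r ∈ P.roots, r < a := by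
        intro r hr
        by_contra hge
        push_neg at hge
        have hmono := eval_mono hPd hge (fun x h1 _ => hsign_hi x h1)
        have hr0 : P.eval r = 0 := (mem_roots hP0).mp hr
        linarith
      have hpa : p.eval a = 0 := by simp [hp]
      rw [hder, eval_mul, eval_C, hlead] at hpa
      nlinarith [evalderiv_pos hSne hroots_lt]
    have hCd : 0 ≤ P.eval d := by
      by_contra hneg
      push_neg at hneg
      have hroots_gt : ∀ r ∈ P.roots, d < r := by
        intro r hr
        by_contra hle
        push_neg at hle
        have hmono := eval_mono hPd hle (fun x _ h2 => hsign_lo x h2)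
        have hr0 : P.eval r = 0 := (mem_roots hP0).mp hr
        linarith
      have hpd : p.eval d = 0 := by simp [hp]
      have hev := evalderiv_sign hSne hroots_gt
      rw [hcard5] at hev
      norm_num at hev
      rw [hder, eval_mul, eval_C, hlead] at hpd
      nlinarith
    -- P and P0 differ by a constant
    have hDd : derivative (P - P0 a b c d) = 0 := by
      rw [derivative_sub, hPd, hP0p, sub_self]
    have hD0 : (P - P0 a b c d).natDegree = 0 :=
      natDegree_eq_zero_of_derivative_eq_zero hDd
    have hDC := eq_C_of_natDegree_eq_zero hD0
    have hea : P.eval a - (P0 a b c d).eval a = (P - P0 a b c d).coeff 0 := by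
      conv_lhs => rw [show P.eval a - (P0 a b c d).eval a = (P - P0 a b c d).eval a by
        rw [eval_sub]]
      rw [hDC]; simp
    have hed : P.eval d - (P0 a b c d).eval d = (P - P0 a b c d).coeff 0 := by
      conv_lhs => rw [show P.eval d - (P0 a b c d).eval d = (P - P0 a b c d).eval d by
        rw [eval_sub]]
      rw [hDC]; simp
    linarith
  · intro h
    set c0 := max ((P0 a b c d).eval a) ((P0 a b c d).eval c) with hc0
    refine ⟨P0 a b c d - C c0, ?_, ?_⟩
    · rw [derivative_sub, derivative_C, sub_zero, hP0p]
    set P := P0 a b c d - C c0 with hPdef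
    have hPd : derivative P = p := by
      rw [hPdef, derivative_sub, derivative_C, sub_zero, hP0p]
    obtain ⟨hdeg5, hc5⟩ := deg_facts hPd hpm hp4
    have hP0 : P ≠ 0 := by
      intro h0; rw [h0] at hdeg5; simp at hdeg5
    have hlead : P.leadingCoeff = 1/5 := by rw [leadingCoeff, hdeg5, hc5]
    have hdP : derivative P ≠ 0 := by rw [hPd]; exact hp0
    have hP0cd : (P0 a b c d).eval c ≤ (P0 a b c d).eval d :=
      eval_anti hP0p hdc (fun x h1 h2 => hsign_dc x h1 h2)
    have hP0ab : (P0 a b c d).eval a ≤ (P0 a b c d).eval b :=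
      eval_anti hP0p hba (fun x h1 h2 => hsign_ba x h1 h2)
    have hP0cb : (P0 a b c d).eval c ≤ (P0 a b c d).eval b :=
      eval_mono hP0p hcb (fun x h1 h2 => hsign_cb x h1 h2)
    have hPa : P.eval a ≤ 0 := by
      rw [hPdef, eval_sub, eval_C, sub_nonpos]; exact le_max_left _ _
    have hPc : P.eval c ≤ 0 := by
      rw [hPdef, eval_sub, eval_C, sub_nonpos]; exact le_max_right _ _
    have hPdd : 0 ≤ P.eval d := by
      rw [hPdef, eval_sub, eval_C, sub_nonneg]; exact max_le h hP0cd
    have hPb : 0 ≤ P.eval b := by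
      rw [hPdef, eval_sub, eval_C, sub_nonneg]; exact max_le hP0ab hP0cb
    -- endpoints
    have hdegpos : 0 < P.degree := by
      rw [degree_eq_natDegree hP0, hdeg5]; exact_mod_cast Nat.succ_pos 4
    obtain ⟨M, hM0, hMa⟩ :
        ∃ M, 0 ≤ P.eval M ∧ a ≤ M := by
      have h1 := P.tendsto_atTop_of_leadingCoeff_nonneg hdegpos (by rw [hlead]; norm_num)
      exact ((h1.eventually_ge_atTop 0).and (Filter.eventually_ge_atTop a)).exists
    obtain ⟨L, hL0, hLd⟩ :
        ∃ L, P.eval L ≤ 0 ∧ L ≤ d := by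
      set Q := P.comp (-X) with hQ
      have hXne : (-X : Polynomial ℝ).natDegree ≠ 0 := by
        rw [natDegree_neg, natDegree_X]; norm_num
      have hQdeg : Q.natDegree = 5 := by
        rw [hQ, natDegree_comp, natDegree_neg, natDegree_X, hdeg5, mul_one]
      have hQ0 : Q ≠ 0 := by intro h0; rw [h0] at hQdeg; simp at hQdeg
      have hQdegpos : 0 < Q.degree := by
        rw [degree_eq_natDegree hQ0, hQdeg]; exact_mod_cast Nat.succ_pos 4
      have hQlead : Q.leadingCoeff ≤ 0 := by
        rw [hQ, leadingCoeff_comp hXne, hlead, hdeg5]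
        norm_num
      have h1 := Q.tendsto_atBot_of_leadingCoeff_nonpos hQdegpos hQlead
      obtain ⟨N, hN0, hNd⟩ :=
        ((h1.eventually_le_atBot 0).and (Filter.eventually_ge_atTop (-d))).exists
      refine ⟨-N, ?_, by linarith⟩
      rw [hQ, eval_comp] at hN0
      simpa using hN0
    -- IVT roots
    have hcont : Continuous fun x => P.eval x := P.continuous
    obtain ⟨a1, ha1mem, ha1⟩ : ∃ a1 ∈ Set.Icc L d, P.eval a1 = 0 := by
      have := intermediate_value_Icc hLd hcont.continuousOn
      have h0 : (0:ℝ) ∈ Set.Icc (P.eval L) (P.eval d) := ⟨hL0, hPdd⟩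
      obtain ⟨x, hx, hx0⟩ := this h0
      exact ⟨x, hx, hx0⟩
    obtain ⟨a2, ha2mem, ha2⟩ : ∃ a2 ∈ Set.Icc d c, P.eval a2 = 0 := by
      have := intermediate_value_Icc' hdc hcont.continuousOn
      obtain ⟨x, hx, hx0⟩ := this (⟨hPc, hPdd⟩ : (0:ℝ) ∈ Set.Icc (P.eval c) (P.eval d))
      exact ⟨x, hx, hx0⟩
    obtain ⟨a3, ha3mem, ha3⟩ : ∃ a3 ∈ Set.Icc c b, P.eval a3 = 0 := by
      have := intermediate_value_Icc hcb hcont.continuousOn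
      obtain ⟨x, hx, hx0⟩ := this (⟨hPc, hPb⟩ : (0:ℝ) ∈ Set.Icc (P.eval c) (P.eval b))
      exact ⟨x, hx, hx0⟩
    obtain ⟨a4, ha4mem, ha4⟩ : ∃ a4 ∈ Set.Icc b a, P.eval a4 = 0 := by
      have := intermediate_value_Icc' hba hcont.continuousOn
      obtain ⟨x, hx, hx0⟩ := this (⟨hPa, hPb⟩ : (0:ℝ) ∈ Set.Icc (P.eval a) (P.eval b))
      exact ⟨x, hx, hx0⟩
    obtain ⟨a5, ha5mem, ha5⟩ : ∃ a5 ∈ Set.Icc a M, P.eval a5 = 0 := by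
      have := intermediate_value_Icc hMa hcont.continuousOn
      obtain ⟨x, hx, hx0⟩ := this (⟨hPa, hM0⟩ : (0:ℝ) ∈ Set.Icc (P.eval a) (P.eval M))
      exact ⟨x, hx, hx0⟩
    have c1 : a1 ≤ d := ha1mem.2
    have c2 : d ≤ a2 := ha2mem.1
    have c3 : a2 ≤ c := ha2mem.2
    have c4 : c ≤ a3 := ha3mem.1
    have c5 : a3 ≤ b := ha3mem.2
    have c6 : b ≤ a4 := ha4mem.1
    have c7 : a4 ≤ a := ha4mem.2
    have c8 : a ≤ a5 := ha5mem.1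
    have hM5 : ({a1, a2, a3, a4, a5} : Multiset ℝ) ≤ P.roots :=
      count_le_mult hPd hdP hp ha1 ha2 ha3 ha4 ha5 c1 c2 c3 c4 c5 c6 c7 c8
    have hcount5 : Multiset.card ({a1, a2, a3, a4, a5} : Multiset ℝ) = 5 := by
      simp
    have hge := Multiset.card_le_card hM5
    rw [hcount5] at hge
    apply hyperbolic_of_card
    refine le_antisymm P.card_roots' ?_
    rw [hdeg5]; exact hge

theorem stmt_6 (w : Fin 4 → ℝ) (hw : ∀ i j : Fin 4, i ≤ j → w j ≤ w i)
    (p : Polynomial ℝ)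
    (hp : p = (X - C (w 0)) * (X - C (w 1)) * (X - C (w 2)) * (X - C (w 3)))
    (A : Matrix (Fin 4) (Fin 4) ℝ)
    (hA : A = !![6, -5, -5, 4; -5, 0, 10, -5; -5, 10, 0, -5; 4, -5, -5, 6]) :
    (∃ P : Polynomial ℝ, derivative P = p ∧ Hyperbolic P) ↔
      0 ≤ dotProduct w (A.mulVec w) := by
  have hba : w 1 ≤ w 0 := hw 0 1 (by decide)
  have hcb : w 2 ≤ w 1 := hw 1 2 (by decide)
  have hdc : w 3 ≤ w 2 := hw 2 3 (by decide)
  have had : w 3 ≤ w 0 := le_trans hdc (le_trans hcb hba)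
  have hE : dotProduct w (A.mulVec w) =
      6*(w 0)^2 + 6*(w 3)^2 - 10*(w 0)*(w 1) - 10*(w 0)*(w 2) + 8*(w 0)*(w 3)
        + 20*(w 1)*(w 2) - 10*(w 1)*(w 3) - 10*(w 2)*(w 3) := by
    subst hA
    simp [dotProduct, Matrix.mulVec, Fin.sum_univ_four]
    ring
  rw [main_equiv (w 0) (w 1) (w 2) (w 3) hba hcb hdc p hp, hE]
  have hid := P0_identity (w 0) (w 1) (w 2) (w 3)
  constructor
  · intro hle
    rcases eq_or_lt_of_le had with heq | hlt
    · have hb : w 1 = w 0 := le_antisymm hba (by linarith)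
      have hc : w 2 = w 0 := le_antisymm (by linarith) (by linarith)
      have hd : w 3 = w 0 := heq
      rw [hb, hc, hd]
      ring_nf
      try exact le_refl 0
    · by_contra hneg
      push_neg at hneg
      have h3 : (0:ℝ) < (w 0 - w 3)^3 := pow_pos (by linarith) 3
      have := mul_neg_of_pos_of_neg h3 hneg
      linarith
  · intro hE0
    have h3 : (0:ℝ) ≤ (w 0 - w 3)^3 := pow_nonneg (by linarith) 3
    have := mul_nonneg h3 hE0
    linarith
end

section
/- Let w_1 ≥ w_2 ≥ w_3 ≥ w_4 be real numbers and let p(x) = (x - w_1)(x - w_2)(x - w_3)(x - w_4). Then p has a hyperbolic antiderivative if and only if 5(2w_2 - w_1 - w_4)(2w_3 - w_1 - w_4) + (w_1 - w_4)² ≥ 0. -/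
open Polynomial

namespace Stmt8Aux

/-- Count-sum bound for multisets. -/
lemma sum_counts_le_card (l : List (ℝ × ℕ)) :
    ∀ S : Multiset ℝ, l.Pairwise (fun u v => u.1 ≠ v.1) →
      (∀ u ∈ l, u.2 ≤ S.count u.1) → (l.map Prod.snd).sum ≤ Multiset.card S := by
  induction l with
  | nil => intro S _ _; simp
  | cons u t ih =>
    intro S hpw hcnt
    have hu : u.2 ≤ S.count u.1 := hcnt u (by simp)
    have hrep : Multiset.replicate u.2 u.1 ≤ S := by
      rw [Multiset.le_iff_count]
      intro x
      by_cases hx : x = u.1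
      · subst hx; simpa [Multiset.count_replicate] using hu
      · rw [Multiset.count_replicate, if_neg (Ne.symm hx)]
        exact Nat.zero_le _
    have hcard : Multiset.card (S - Multiset.replicate u.2 u.1)
        = Multiset.card S - u.2 := by
      rw [Multiset.card_sub hrep, Multiset.card_replicate]
    have ht : (t.map Prod.snd).sum ≤ Multiset.card (S - Multiset.replicate u.2 u.1) := by
      apply ih _ (List.Pairwise.sublist (List.sublist_cons_self u t) hpw)
      intro v hv
      have hne : u.1 ≠ v.1 := (List.pairwise_cons.mp hpw).1 v hv
      rw [Multiset.count_sub, Multiset.count_replicate, if_neg hne]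
      simpa using hcnt v (by simp [hv])
    have hucard : u.2 ≤ Multiset.card S := hu.trans (Multiset.count_le_card _ _)
    simp only [List.map_cons, List.sum_cons]
    omega

/-- If the real roots (with multiplicity) exhaust the degree, the polynomial is hyperbolic. -/
lemma hyperbolic_of_card (P : Polynomial ℝ) (hP : P ≠ 0)
    (h : P.natDegree ≤ Multiset.card P.roots) : Hyperbolic P := by
  have hsp : P.Splits :=
    (splits_iff_card_roots).mpr (le_antisymm (P.card_roots') h)
  intro z hz
  rw [hsp.roots_map] at hz
  obtain ⟨r, _, rfl⟩ := Multiset.mem_map.mp hz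
  simp [Complex.ofReal_im]

lemma simple_count (P : Polynomial ℝ) (hP : P ≠ 0) {t : ℝ} (ht : P.eval t = 0) :
    1 ≤ P.roots.count t := by
  rw [Polynomial.count_roots]
  exact (Polynomial.rootMultiplicity_pos hP).mpr ht

lemma cluster_count (P p : Polynomial ℝ) (hd : derivative P = p) (hP : P ≠ 0)
    {t : ℝ} (ht : P.eval t = 0) {m : ℕ} (hm : m ≤ p.roots.count t) :
    m + 1 ≤ P.roots.count t := by
  have h1 : 1 ≤ P.roots.count t := simple_count P hP ht
  rw [Polynomial.count_roots] at h1 ⊢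
  have := Polynomial.derivative_rootMultiplicity_of_root (p := P) (t := t) ht
  rw [hd] at this
  have hmp : p.roots.count t = rootMultiplicity t p := Polynomial.count_roots p
  omega

lemma poly_ivt (P : Polynomial ℝ) {a b : ℝ} (hab : a ≤ b) (h1 : P.eval a ≤ 0)
    (h2 : 0 ≤ P.eval b) : ∃ x ∈ Set.Icc a b, P.eval x = 0 := by
  have hc : ContinuousOn (fun x => P.eval x) (Set.Icc a b) :=
    (Polynomial.continuous P).continuousOn
  have := intermediate_value_Icc hab hc (Set.mem_Icc.mpr ⟨h1, h2⟩)
  obtain ⟨x, hx, hx0⟩ := this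
  exact ⟨x, hx, hx0⟩

lemma poly_ivt' (P : Polynomial ℝ) {a b : ℝ} (hab : a ≤ b) (h1 : 0 ≤ P.eval a)
    (h2 : P.eval b ≤ 0) : ∃ x ∈ Set.Icc a b, P.eval x = 0 := by
  have hc : ContinuousOn (fun x => P.eval x) (Set.Icc a b) :=
    (Polynomial.continuous P).continuousOn
  have := intermediate_value_Icc' hab hc (Set.mem_Icc.mpr ⟨h2, h1⟩)
  obtain ⟨x, hx, hx0⟩ := this
  exact ⟨x, hx, hx0⟩

lemma exists_top (P : Polynomial ℝ) (h5 : P.natDegree = 5) (hlc : 0 < P.leadingCoeff)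
    (a : ℝ) : ∃ y, a < y ∧ 0 < P.eval y := by
  have hdeg : 0 < P.degree := natDegree_pos_iff_degree_pos.mp (by omega)
  have h := P.tendsto_atTop_of_leadingCoeff_nonneg hdeg hlc.le
  have := (h.eventually_gt_atTop 0).and (Filter.eventually_gt_atTop a)
  obtain ⟨y, hy1, hy2⟩ := this.exists
  exact ⟨y, hy2, hy1⟩

lemma exists_bot (P : Polynomial ℝ) (h5 : P.natDegree = 5) (hlc : 0 < P.leadingCoeff)
    (b : ℝ) : ∃ x, x < b ∧ P.eval x < 0 := by
  set Q : Polynomial ℝ := P.comp (-X) with hQ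
  have hndX : (-X : Polynomial ℝ).natDegree = 1 := by simp
  have hndQ : Q.natDegree = 5 := by rw [hQ, natDegree_comp, hndX, h5, mul_one]
  have hlcQ : Q.leadingCoeff = -P.leadingCoeff := by
    rw [hQ, Polynomial.leadingCoeff_comp (by rw [hndX]; norm_num), h5]
    have : (-X : Polynomial ℝ).leadingCoeff = -1 := by simp
    rw [this]; ring
  have hdeg : 0 < Q.degree := natDegree_pos_iff_degree_pos.mp (by omega)
  have h := Q.tendsto_atBot_of_leadingCoeff_nonpos hdeg (by rw [hlcQ]; linarith)
  have := (h.eventually_lt_atBot 0).and (Filter.eventually_gt_atTop (-b))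
  obtain ⟨y, hy1, hy2⟩ := this.exists
  refine ⟨-y, by linarith, ?_⟩
  have : Q.eval y = P.eval (-y) := by simp [hQ, eval_comp]
  linarith [this ▸ hy1]

lemma mono_eval (F p : Polynomial ℝ) (hF : derivative F = p) {a b : ℝ} (hab : a ≤ b)
    (hsign : ∀ x ∈ Set.Icc a b, 0 ≤ p.eval x) : F.eval a ≤ F.eval b := by
  have hm : MonotoneOn (fun x => F.eval x) (Set.Icc a b) := by
    apply monotoneOn_of_deriv_nonneg (convex_Icc a b)
      ((Polynomial.continuous F).continuousOn)
      ((Polynomial.differentiable F).differentiableOn)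
    intro x hx
    rw [Polynomial.deriv, hF]
    exact hsign x (interior_subset hx)
  exact hm (Set.left_mem_Icc.mpr hab) (Set.right_mem_Icc.mpr hab) hab

lemma anti_eval (F p : Polynomial ℝ) (hF : derivative F = p) {a b : ℝ} (hab : a ≤ b)
    (hsign : ∀ x ∈ Set.Icc a b, p.eval x ≤ 0) : F.eval b ≤ F.eval a := by
  have hm : AntitoneOn (fun x => F.eval x) (Set.Icc a b) := by
    apply antitoneOn_of_deriv_nonpos (convex_Icc a b)
      ((Polynomial.continuous F).continuousOn)
      ((Polynomial.differentiable F).differentiableOn)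
    intro x hx
    rw [Polynomial.deriv, hF]
    exact hsign x (interior_subset hx)
  exact hm (Set.left_mem_Icc.mpr hab) (Set.right_mem_Icc.mpr hab) hab


/-- A hyperbolic polynomial splits into real linear factors. -/
lemma hyperbolic_prod (P : Polynomial ℝ) (hH : ∀ z ∈ (P.map (algebraMap ℝ ℂ)).roots, z.im = 0)
    (hP : P ≠ 0) :
    ∃ R : Multiset ℝ, Multiset.card R = P.natDegree ∧
      P = C P.leadingCoeff * (R.map fun r => X - C r).prod := by
  set f : ℝ →+* ℂ := algebraMap ℝ ℂ with hf
  have hinj : Function.Injective f := f.injective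
  have hsC : (P.map f).Splits := IsAlgClosed.splits _
  have hprod := hsC.eq_prod_roots
  set R : Multiset ℝ := (P.map f).roots.map Complex.re with hR
  have hRf : R.map f = (P.map f).roots := by
    rw [hR, Multiset.map_map]
    have : ∀ z ∈ (P.map f).roots, (f ∘ Complex.re) z = id z := by
      intro z hz
      have him := hH z hz
      apply Complex.ext
      · simp [hf]
      · simp [hf, him]
    rw [Multiset.map_congr rfl this, Multiset.map_id]
  refine ⟨R, ?_, ?_⟩
  · rw [hR, Multiset.card_map]
    rw [← hsC.natDegree_eq_card_roots, natDegree_map]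
  · apply Polynomial.map_injective f hinj
    rw [hprod, Polynomial.map_mul, Polynomial.map_C, Polynomial.map_multiset_prod,
      Polynomial.leadingCoeff_map f]
    congr 1
    have hmaps : Multiset.map (fun a => (X:Polynomial ℂ) - C a) ((P.map f).roots)
        = Multiset.map (Polynomial.map f) (Multiset.map (fun r => X - C r) R) := by
      rw [← hRf]
      simp only [Multiset.map_map]
      refine Multiset.map_congr rfl ?_
      intro z _
      show (X:Polynomial ℂ) - C (f z) = Polynomial.map f (X - C z)
      rw [Polynomial.map_sub, Polynomial.map_X, Polynomial.map_C]
    rw [hmaps]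

/-- Key sign lemma (Laguerre-type SOS argument). -/
lemma sos_key (d₁ d₂ d₃ d₄ d₅ π : ℝ) (hπ : 0 ≤ π)
    (h1 : d₂*d₃*d₄*d₅ + d₁*(d₃*d₄*d₅) + d₁*(d₂*(d₄*d₅)) + d₁*(d₂*(d₃*d₅)) + d₁*(d₂*(d₃*d₄)) = 0)
    (h2 : 2*(d₃*d₄*d₅ + d₂*d₄*d₅ + d₂*d₃*d₅ + d₂*d₃*d₄ + d₁*d₄*d₅ + d₁*d₃*d₅ + d₁*d₃*d₄
        + d₁*d₂*d₅ + d₁*d₂*d₄ + d₁*d₂*d₃) = 5*π) :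
    d₁*d₂*d₃*d₄*d₅ ≤ 0 := by
  have hsum : d₂*d₃*d₄*d₅ + d₁*d₃*d₄*d₅ + d₁*d₂*d₄*d₅ + d₁*d₂*d₃*d₅ + d₁*d₂*d₃*d₄ = 0 := by
    linear_combination h1
  have key : (d₂*d₃*d₄*d₅)^2 + (d₁*d₃*d₄*d₅)^2 + (d₁*d₂*d₄*d₅)^2 + (d₁*d₂*d₃*d₅)^2
      + (d₁*d₂*d₃*d₄)^2 + 5*π*(d₁*d₂*d₃*d₄*d₅) = 0 := by
    linear_combination (d₂*d₃*d₄*d₅ + d₁*d₃*d₄*d₅ + d₁*d₂*d₄*d₅ + d₁*d₂*d₃*d₅ + d₁*d₂*d₃*d₄) * hsum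
      - (d₁*d₂*d₃*d₄*d₅) * h2
  rcases hπ.eq_or_lt with hπ0 | hπ0
  · rw [← hπ0] at key
    have hA1sq : (d₂*d₃*d₄*d₅)^2 ≤ 0 := by
      nlinarith [sq_nonneg (d₁*d₃*d₄*d₅), sq_nonneg (d₁*d₂*d₄*d₅),
        sq_nonneg (d₁*d₂*d₃*d₅), sq_nonneg (d₁*d₂*d₃*d₄)]
    have hA1 : d₂*d₃*d₄*d₅ = 0 :=
      (pow_eq_zero_iff two_ne_zero).mp (le_antisymm hA1sq (sq_nonneg _))
    have : d₁*d₂*d₃*d₄*d₅ = 0 := by linear_combination d₁ * hA1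
    exact this.le
  · by_contra hc
    push_neg at hc
    have h5 : 0 < π*(d₁*d₂*d₃*d₄*d₅) := mul_pos hπ0 hc
    nlinarith [sq_nonneg (d₂*d₃*d₄*d₅), sq_nonneg (d₁*d₃*d₄*d₅), sq_nonneg (d₁*d₂*d₄*d₅),
      sq_nonneg (d₁*d₂*d₃*d₅), sq_nonneg (d₁*d₂*d₃*d₄)]


noncomputable def F0 (w₁ w₂ w₃ w₄ : ℝ) : Polynomial ℝ :=
  C (1/5) * X^5 - C ((w₁+w₂+w₃+w₄)/4) * X^4
    + C ((w₁*w₂+w₁*w₃+w₁*w₄+w₂*w₃+w₂*w₄+w₃*w₄)/3) * X^3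
    - C ((w₁*w₂*w₃+w₁*w₂*w₄+w₁*w₃*w₄+w₂*w₃*w₄)/2) * X^2
    + C (w₁*w₂*w₃*w₄) * X

lemma F0_deriv (w₁ w₂ w₃ w₄ : ℝ) :
    derivative (F0 w₁ w₂ w₃ w₄) = (X - C w₁) * (X - C w₂) * (X - C w₃) * (X - C w₄) := by
  unfold F0
  simp only [derivative_add, derivative_sub, derivative_mul, derivative_C, derivative_X_pow,
    derivative_X, zero_mul, mul_one, zero_add]
  apply Polynomial.funext
  intro x
  simp only [eval_add, eval_sub, eval_mul, eval_pow, eval_X, eval_C, eval_natCast]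
  push_cast
  ring

lemma F0_eval (w₁ w₂ w₃ w₄ x : ℝ) :
    (F0 w₁ w₂ w₃ w₄).eval x = x^5/5 - ((w₁+w₂+w₃+w₄)/4)*x^4
      + ((w₁*w₂+w₁*w₃+w₁*w₄+w₂*w₃+w₂*w₄+w₃*w₄)/3)*x^3
      - ((w₁*w₂*w₃+w₁*w₂*w₄+w₁*w₃*w₄+w₂*w₃*w₄)/2)*x^2
      + (w₁*w₂*w₃*w₄)*x := by
  unfold F0
  simp only [eval_add, eval_sub, eval_mul, eval_pow, eval_X, eval_C]
  ring

lemma F0_diff (w₁ w₂ w₃ w₄ : ℝ) :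
    (F0 w₁ w₂ w₃ w₄).eval w₁ - (F0 w₁ w₂ w₃ w₄).eval w₄
      = -((w₁-w₄)^3/120) * (5*(2*w₂-w₁-w₄)*(2*w₃-w₁-w₄)+(w₁-w₄)^2) := by
  rw [F0_eval, F0_eval]; ring

lemma F0_natDegree (w₁ w₂ w₃ w₄ c : ℝ) : (F0 w₁ w₂ w₃ w₄ + C c).natDegree = 5 := by
  unfold F0
  compute_degree!

lemma F0_coeff5 (w₁ w₂ w₃ w₄ c : ℝ) : (F0 w₁ w₂ w₃ w₄ + C c).coeff 5 = 1/5 := by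
  unfold F0
  simp [coeff_add, coeff_C, coeff_C_mul, coeff_X_pow, coeff_X]


lemma prod5_deriv (a r₁ r₂ r₃ r₄ r₅ : ℝ) :
    derivative (C a * ((X - C r₁) * (X - C r₂) * (X - C r₃) * (X - C r₄) * (X - C r₅)))
      = C a * ((X - C r₂)*(X - C r₃)*(X - C r₄)*(X - C r₅)
             + (X - C r₁)*(X - C r₃)*(X - C r₄)*(X - C r₅)
             + (X - C r₁)*(X - C r₂)*(X - C r₄)*(X - C r₅)
             + (X - C r₁)*(X - C r₂)*(X - C r₃)*(X - C r₅)
             + (X - C r₁)*(X - C r₂)*(X - C r₃)*(X - C r₄)) := by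
  simp only [derivative_mul, derivative_sub, derivative_X, derivative_C, zero_mul, mul_one,
    zero_add, sub_zero, zero_sub, mul_zero]
  apply Polynomial.funext
  intro x
  simp only [eval_add, eval_sub, eval_mul, eval_X, eval_C, eval_one]
  ring

lemma sum4_deriv (a r₁ r₂ r₃ r₄ r₅ : ℝ) :
    derivative (C a * ((X - C r₂)*(X - C r₃)*(X - C r₄)*(X - C r₅)
             + (X - C r₁)*(X - C r₃)*(X - C r₄)*(X - C r₅)
             + (X - C r₁)*(X - C r₂)*(X - C r₄)*(X - C r₅)
             + (X - C r₁)*(X - C r₂)*(X - C r₃)*(X - C r₅)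
             + (X - C r₁)*(X - C r₂)*(X - C r₃)*(X - C r₄)))
      = C a * (2 * ((X - C r₃)*(X - C r₄)*(X - C r₅) + (X - C r₂)*(X - C r₄)*(X - C r₅)
             + (X - C r₂)*(X - C r₃)*(X - C r₅) + (X - C r₂)*(X - C r₃)*(X - C r₄)
             + (X - C r₁)*(X - C r₄)*(X - C r₅) + (X - C r₁)*(X - C r₃)*(X - C r₅)
             + (X - C r₁)*(X - C r₃)*(X - C r₄) + (X - C r₁)*(X - C r₂)*(X - C r₅)
             + (X - C r₁)*(X - C r₂)*(X - C r₄) + (X - C r₁)*(X - C r₂)*(X - C r₃))) := by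
  simp only [derivative_mul, derivative_add, derivative_sub, derivative_X, derivative_C, zero_mul,
    mul_one, zero_add, sub_zero, zero_sub, mul_zero]
  apply Polynomial.funext
  intro x
  simp only [eval_add, eval_sub, eval_mul, eval_X, eval_C, eval_one, eval_ofNat]
  ring

lemma quartic_deriv (w₁ w₂ w₃ w₄ : ℝ) :
    derivative ((X - C w₁) * (X - C w₂) * (X - C w₃) * (X - C w₄))
      = (X - C w₂)*(X - C w₃)*(X - C w₄) + (X - C w₁)*(X - C w₃)*(X - C w₄)
        + (X - C w₁)*(X - C w₂)*(X - C w₄) + (X - C w₁)*(X - C w₂)*(X - C w₃) := by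
  simp only [derivative_mul, derivative_sub, derivative_X, derivative_C, zero_mul, mul_one,
    zero_add, sub_zero, zero_sub, mul_zero]
  apply Polynomial.funext
  intro x
  simp only [eval_add, eval_sub, eval_mul, eval_X, eval_C, eval_one]
  ring

lemma hyperbolic_pow5 (w : ℝ) : Hyperbolic (C (1/5 : ℝ) * (X - C w)^5) := by
  intro z hz
  have hz0 := isRoot_of_mem_roots hz
  simp only [IsRoot, Polynomial.map_mul, Polynomial.map_pow, Polynomial.map_sub,
    Polynomial.map_X, Polynomial.map_C, eval_mul, eval_pow, eval_sub, eval_X, eval_C] at hz0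
  have h5 : (algebraMap ℝ ℂ) (1/5) ≠ 0 := by
    simp only [ne_eq, _root_.map_eq_zero]
    norm_num
  have hpow := (mul_eq_zero.mp hz0).resolve_left h5
  have : z - algebraMap ℝ ℂ w = 0 := pow_eq_zero_iff (by norm_num) |>.mp hpow
  have hzw : z = algebraMap ℝ ℂ w := by linear_combination this
  rw [hzw]
  exact Complex.ofReal_im w

lemma pow5_deriv (w : ℝ) :
    derivative (C (1/5 : ℝ) * (X - C w)^5) = (X - C w)^4 := by
  simp only [derivative_mul, derivative_pow, derivative_sub, derivative_X, derivative_C, zero_mul,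
    mul_one, zero_add, sub_zero, zero_sub, mul_zero]
  apply Polynomial.funext
  intro x
  simp only [eval_add, eval_sub, eval_mul, eval_pow, eval_X, eval_C, eval_one, eval_natCast]
  push_cast
  ring


lemma multiset_card5 (R : Multiset ℝ) (h : Multiset.card R = 5) :
    ∃ r₁ r₂ r₃ r₄ r₅ : ℝ, R = {r₁, r₂, r₃, r₄, r₅} := by
  obtain ⟨r₁, h1⟩ := Multiset.card_pos_iff_exists_mem.mp (show 0 < Multiset.card R by omega)
  obtain ⟨R₁, rfl⟩ := Multiset.exists_cons_of_mem h1
  rw [Multiset.card_cons] at h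
  obtain ⟨r₂, h2⟩ := Multiset.card_pos_iff_exists_mem.mp (show 0 < Multiset.card R₁ by omega)
  obtain ⟨R₂, rfl⟩ := Multiset.exists_cons_of_mem h2
  rw [Multiset.card_cons] at h
  obtain ⟨r₃, h3⟩ := Multiset.card_pos_iff_exists_mem.mp (show 0 < Multiset.card R₂ by omega)
  obtain ⟨R₃, rfl⟩ := Multiset.exists_cons_of_mem h3
  rw [Multiset.card_cons] at h
  obtain ⟨r₄, h4⟩ := Multiset.card_pos_iff_exists_mem.mp (show 0 < Multiset.card R₃ by omega)
  obtain ⟨R₄, rfl⟩ := Multiset.exists_cons_of_mem h4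
  rw [Multiset.card_cons] at h
  obtain ⟨r₅, h5⟩ := Multiset.card_pos_iff_exists_mem.mp (show 0 < Multiset.card R₄ by omega)
  obtain ⟨R₅, rfl⟩ := Multiset.exists_cons_of_mem h5
  rw [Multiset.card_cons] at h
  have : R₅ = 0 := Multiset.card_eq_zero.mp (by omega)
  subst this
  exact ⟨r₁, r₂, r₃, r₄, r₅, rfl⟩

set_option maxHeartbeats 1000000 in
lemma forward (w₁ w₂ w₃ w₄ : ℝ) (h12 : w₂ ≤ w₁) (h23 : w₃ ≤ w₂) (h34 : w₄ ≤ w₃)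
    (p : Polynomial ℝ)
    (hp : p = (X - C w₁) * (X - C w₂) * (X - C w₃) * (X - C w₄))
    (P : Polynomial ℝ) (hd : derivative P = p) (hH : Hyperbolic P) :
    0 ≤ 5 * (2 * w₂ - w₁ - w₄) * (2 * w₃ - w₁ - w₄) + (w₁ - w₄) ^ 2 := by
  have hpmonic : p.Monic := by
    rw [hp]
    exact (((monic_X_sub_C w₁).mul (monic_X_sub_C w₂)).mul (monic_X_sub_C w₃)).mul
      (monic_X_sub_C w₄)
  have hpnd : p.natDegree = 4 := by rw [hp]; compute_degree!
  have hpne : p ≠ 0 := hpmonic.ne_zero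
  have hPne : P ≠ 0 := by
    intro h
    rw [h, derivative_zero] at hd
    exact hpne hd.symm
  have hnd0 : P.natDegree ≠ 0 := by
    intro h0
    have hc := Polynomial.eq_C_of_natDegree_eq_zero h0
    rw [hc, derivative_C] at hd
    exact hpne hd.symm
  have hndge : 5 ≤ P.natDegree := by
    have := Polynomial.natDegree_derivative_lt hnd0
    rw [hd, hpnd] at this
    omega
  have hndle : P.natDegree ≤ 5 := by
    rw [Polynomial.natDegree_le_iff_coeff_eq_zero]
    intro m hm
    obtain ⟨n, rfl⟩ : ∃ n, m = n + 6 := ⟨m - 6, by omega⟩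
    have hcd := Polynomial.coeff_derivative P (n + 5)
    rw [hd] at hcd
    have hz : p.coeff (n + 5) = 0 :=
      Polynomial.coeff_eq_zero_of_natDegree_lt (by rw [hpnd]; omega)
    rw [hz] at hcd
    have hne : ((n + 5 : ℕ) : ℝ) + 1 ≠ 0 := by positivity
    have := (mul_eq_zero.mp hcd.symm).resolve_right hne
    convert this using 2
  have hndP : P.natDegree = 5 := le_antisymm hndle hndge
  have hcoeff5 : P.coeff 5 = 1/5 := by
    have hcd := Polynomial.coeff_derivative P 4
    rw [hd] at hcd
    have : p.coeff 4 = 1 := by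
      have := hpmonic.coeff_natDegree
      rwa [hpnd] at this
    rw [this] at hcd
    norm_num at hcd
    linarith
  have hlc : P.leadingCoeff = 1/5 := by rw [Polynomial.leadingCoeff, hndP]; exact hcoeff5
  obtain ⟨R, hRcard, hPfact⟩ := hyperbolic_prod P hH hPne
  rw [hndP] at hRcard
  rw [hlc] at hPfact
  obtain ⟨r₁, r₂, r₃, r₄, r₅, rfl⟩ := multiset_card5 R hRcard
  have hP5 : P = C (1/5) * ((X - C r₁) * (X - C r₂) * (X - C r₃) * (X - C r₄) * (X - C r₅)) := by
    rw [hPfact]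
    simp only [Multiset.insert_eq_cons, Multiset.map_cons, Multiset.map_singleton,
      Multiset.prod_cons, Multiset.prod_singleton]
    ring
  have hpr : p = C (1/5 : ℝ) * ((X - C r₂)*(X - C r₃)*(X - C r₄)*(X - C r₅)
             + (X - C r₁)*(X - C r₃)*(X - C r₄)*(X - C r₅)
             + (X - C r₁)*(X - C r₂)*(X - C r₄)*(X - C r₅)
             + (X - C r₁)*(X - C r₂)*(X - C r₃)*(X - C r₅)
             + (X - C r₁)*(X - C r₂)*(X - C r₃)*(X - C r₄)) := by
    rw [← hd, hP5, prod5_deriv]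
  have hdp : derivative p = C (1/5 : ℝ) * (2 * ((X - C r₃)*(X - C r₄)*(X - C r₅)
             + (X - C r₂)*(X - C r₄)*(X - C r₅)
             + (X - C r₂)*(X - C r₃)*(X - C r₅) + (X - C r₂)*(X - C r₃)*(X - C r₄)
             + (X - C r₁)*(X - C r₄)*(X - C r₅) + (X - C r₁)*(X - C r₃)*(X - C r₅)
             + (X - C r₁)*(X - C r₃)*(X - C r₄) + (X - C r₁)*(X - C r₂)*(X - C r₅)
             + (X - C r₁)*(X - C r₂)*(X - C r₄) + (X - C r₁)*(X - C r₂)*(X - C r₃))) := by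
    rw [hpr]
    exact sum4_deriv (1/5) r₁ r₂ r₃ r₄ r₅
  have hdpw : derivative p = (X - C w₂)*(X - C w₃)*(X - C w₄) + (X - C w₁)*(X - C w₃)*(X - C w₄)
        + (X - C w₁)*(X - C w₂)*(X - C w₄) + (X - C w₁)*(X - C w₂)*(X - C w₃) := by
    rw [hp]
    exact quartic_deriv w₁ w₂ w₃ w₄
  -- evaluations at a root t of p
  have keyle : ∀ t : ℝ, p.eval t = 0 →
      ((0 ≤ (derivative p).eval t → (t-r₁)*(t-r₂)*(t-r₃)*(t-r₄)*(t-r₅) ≤ 0) ∧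
       ((derivative p).eval t ≤ 0 → 0 ≤ (t-r₁)*(t-r₂)*(t-r₃)*(t-r₄)*(t-r₅))) := by
    intro t ht
    have hS1 : (t-r₂)*(t-r₃)*(t-r₄)*(t-r₅) + (t-r₁)*(t-r₃)*(t-r₄)*(t-r₅)
        + (t-r₁)*(t-r₂)*(t-r₄)*(t-r₅) + (t-r₁)*(t-r₂)*(t-r₃)*(t-r₅)
        + (t-r₁)*(t-r₂)*(t-r₃)*(t-r₄) = 0 := by
      have h02 : p.eval t = 1/5 * ((t-r₂)*(t-r₃)*(t-r₄)*(t-r₅) + (t-r₁)*(t-r₃)*(t-r₄)*(t-r₅)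
          + (t-r₁)*(t-r₂)*(t-r₄)*(t-r₅) + (t-r₁)*(t-r₂)*(t-r₃)*(t-r₅)
          + (t-r₁)*(t-r₂)*(t-r₃)*(t-r₄)) := by
        rw [hpr]
        simp only [eval_mul, eval_add, eval_sub, eval_X, eval_C]
        try ring
      rw [ht] at h02
      linarith
    have hS2 : (derivative p).eval t = 1/5 * (2 * ((t-r₃)*(t-r₄)*(t-r₅) + (t-r₂)*(t-r₄)*(t-r₅)
        + (t-r₂)*(t-r₃)*(t-r₅) + (t-r₂)*(t-r₃)*(t-r₄) + (t-r₁)*(t-r₄)*(t-r₅)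
        + (t-r₁)*(t-r₃)*(t-r₅) + (t-r₁)*(t-r₃)*(t-r₄) + (t-r₁)*(t-r₂)*(t-r₅)
        + (t-r₁)*(t-r₂)*(t-r₄) + (t-r₁)*(t-r₂)*(t-r₃))) := by
      rw [hdp]
      simp only [eval_mul, eval_add, eval_sub, eval_X, eval_C, eval_ofNat]
      try ring
    constructor
    · intro hπ
      have := sos_key (t-r₁) (t-r₂) (t-r₃) (t-r₄) (t-r₅) ((derivative p).eval t) hπ
        (by linear_combination hS1) (by linear_combination (-5:ℝ) * hS2)
      linarith [this]
    · intro hπ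
      have := sos_key (r₁-t) (r₂-t) (r₃-t) (r₄-t) (r₅-t) (-(derivative p).eval t)
        (by linarith) (by linear_combination hS1) (by linear_combination (5:ℝ) * hS2)
      nlinarith [this]
  -- at w₁
  have hev1 : p.eval w₁ = 0 := by
    rw [hp]
    simp only [eval_mul, eval_sub, eval_X, eval_C, sub_self, zero_mul, mul_zero]
  have hev4 : p.eval w₄ = 0 := by
    rw [hp]
    simp only [eval_mul, eval_sub, eval_X, eval_C, sub_self, zero_mul, mul_zero]
  have hdpw1 : (derivative p).eval w₁ = (w₁-w₂)*(w₁-w₃)*(w₁-w₄) := by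
    rw [hdpw]
    simp only [eval_mul, eval_add, eval_sub, eval_X, eval_C]
    try ring
  have hdpw4 : (derivative p).eval w₄ = (w₄-w₁)*(w₄-w₂)*(w₄-w₃) := by
    rw [hdpw]
    simp only [eval_mul, eval_add, eval_sub, eval_X, eval_C]
    try ring
  have hprod1 : (w₁-r₁)*(w₁-r₂)*(w₁-r₃)*(w₁-r₄)*(w₁-r₅) ≤ 0 := by
    refine (keyle w₁ hev1).1 ?_
    rw [hdpw1]
    have : 0 ≤ (w₁-w₂)*(w₁-w₃) := mul_nonneg (by linarith) (by linarith)
    exact mul_nonneg this (by linarith)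
  have hprod4 : 0 ≤ (w₄-r₁)*(w₄-r₂)*(w₄-r₃)*(w₄-r₄)*(w₄-r₅) := by
    refine (keyle w₄ hev4).2 ?_
    rw [hdpw4]
    have h' : 0 ≤ (w₁-w₄)*(w₂-w₄) := mul_nonneg (by linarith) (by linarith)
    have h'' : 0 ≤ (w₁-w₄)*(w₂-w₄)*(w₃-w₄) := mul_nonneg h' (by linarith)
    nlinarith [h'']
  have hPev1 : P.eval w₁ ≤ 0 := by
    have : P.eval w₁ = 1/5 * ((w₁-r₁)*(w₁-r₂)*(w₁-r₃)*(w₁-r₄)*(w₁-r₅)) := by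
      rw [hP5]
      simp only [eval_mul, eval_sub, eval_X, eval_C]
      try ring
    linarith
  have hPev4 : 0 ≤ P.eval w₄ := by
    have : P.eval w₄ = 1/5 * ((w₄-r₁)*(w₄-r₂)*(w₄-r₃)*(w₄-r₄)*(w₄-r₅)) := by
      rw [hP5]
      simp only [eval_mul, eval_sub, eval_X, eval_C]
      try ring
    linarith
  -- relate to F0
  have hd0 : derivative (P - F0 w₁ w₂ w₃ w₄) = 0 := by
    rw [derivative_sub, hd, F0_deriv, ← hp, sub_self]
  have hPF := Polynomial.eq_C_of_derivative_eq_zero hd0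
  have hdiffP : P.eval w₁ - P.eval w₄ = (F0 w₁ w₂ w₃ w₄).eval w₁ - (F0 w₁ w₂ w₃ w₄).eval w₄ := by
    have h1 := congrArg (Polynomial.eval w₁) hPF
    have h4 := congrArg (Polynomial.eval w₄) hPF
    simp only [eval_sub, eval_C] at h1 h4
    linarith
  have hdiff := F0_diff w₁ w₂ w₃ w₄
  rcases (show w₄ ≤ w₁ by linarith).eq_or_lt with heq | hlt
  · have e2 : w₂ = w₁ := le_antisymm h12 (by linarith)
    have e3 : w₃ = w₁ := le_antisymm (by linarith) (by linarith)
    have : 5 * (2 * w₂ - w₁ - w₄) * (2 * w₃ - w₁ - w₄) + (w₁ - w₄) ^ 2 = 0 := by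
      rw [e2, e3, ← heq]
      ring
    linarith
  · have hcube : 0 < (w₁ - w₄)^3 := pow_pos (by linarith) 3
    by_contra hneg
    push_neg at hneg
    have hq : 0 < (w₁-w₄)^3 * (-(5 * (2 * w₂ - w₁ - w₄) * (2 * w₃ - w₁ - w₄) + (w₁ - w₄) ^ 2)) :=
      mul_pos hcube (by linarith)
    nlinarith [hq, hdiff, hdiffP, hPev1, hPev4]


lemma pw2 (a b : ℝ × ℕ) (h : a.1 ≠ b.1) : [a, b].Pairwise (fun u v => u.1 ≠ v.1) := by
  simpa [List.pairwise_cons] using h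

lemma pw3 (a b c : ℝ × ℕ) (h1 : a.1 ≠ b.1) (h2 : a.1 ≠ c.1) (h3 : b.1 ≠ c.1) :
    [a, b, c].Pairwise (fun u v => u.1 ≠ v.1) := by
  simp [List.pairwise_cons]
  exact ⟨⟨h1, h2⟩, h3⟩

lemma pw4 (a b c d : ℝ × ℕ) (h1 : a.1 ≠ b.1) (h2 : a.1 ≠ c.1) (h3 : a.1 ≠ d.1)
    (h4 : b.1 ≠ c.1) (h5 : b.1 ≠ d.1) (h6 : c.1 ≠ d.1) :
    [a, b, c, d].Pairwise (fun u v => u.1 ≠ v.1) := by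
  simp [List.pairwise_cons]
  exact ⟨⟨h1, h2, h3⟩, ⟨h4, h5⟩, h6⟩

set_option maxHeartbeats 1000000 in
lemma backward (w₁ w₂ w₃ w₄ : ℝ) (h12 : w₂ ≤ w₁) (h23 : w₃ ≤ w₂) (h34 : w₄ ≤ w₃)
    (p : Polynomial ℝ)
    (hp : p = (X - C w₁) * (X - C w₂) * (X - C w₃) * (X - C w₄))
    (hcond : 0 ≤ 5 * (2 * w₂ - w₁ - w₄) * (2 * w₃ - w₁ - w₄) + (w₁ - w₄) ^ 2) :
    ∃ P : Polynomial ℝ, derivative P = p ∧ Hyperbolic P := by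
  rcases (show w₄ ≤ w₁ by linarith).eq_or_lt with heq | hlt
  · have e2 : w₂ = w₁ := le_antisymm h12 (by linarith)
    have e3 : w₃ = w₁ := le_antisymm (by linarith) (by linarith)
    refine ⟨C (1/5 : ℝ) * (X - C w₁)^5, ?_, hyperbolic_pow5 w₁⟩
    rw [pow5_deriv, hp, e2, e3, ← heq]
    rw [show w₄ = w₁ from heq]
    ring
  · set F := F0 w₁ w₂ w₃ w₄ with hF
    have hdF : derivative F = p := by rw [hF, F0_deriv, ← hp]
    have hsign32 : ∀ x ∈ Set.Icc w₃ w₂, 0 ≤ p.eval x := by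
      intro x hx
      obtain ⟨hx1, hx2⟩ := hx
      rw [hp]; simp only [eval_mul, eval_sub, eval_X, eval_C]
      have ha : 0 ≤ (w₁-x)*(w₂-x) := mul_nonneg (by linarith) (by linarith)
      have hb : 0 ≤ (x-w₃)*(x-w₄) := mul_nonneg (by linarith) (by linarith)
      nlinarith [mul_nonneg ha hb]
    have hsign43 : ∀ x ∈ Set.Icc w₄ w₃, p.eval x ≤ 0 := by
      intro x hx
      obtain ⟨hx1, hx2⟩ := hx
      rw [hp]; simp only [eval_mul, eval_sub, eval_X, eval_C]
      have ha : 0 ≤ (w₁-x)*(w₂-x) := mul_nonneg (by linarith) (by linarith)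
      have hb : 0 ≤ (w₃-x)*(x-w₄) := mul_nonneg (by linarith) (by linarith)
      nlinarith [mul_nonneg ha hb]
    have hsign21 : ∀ x ∈ Set.Icc w₂ w₁, p.eval x ≤ 0 := by
      intro x hx
      obtain ⟨hx1, hx2⟩ := hx
      rw [hp]; simp only [eval_mul, eval_sub, eval_X, eval_C]
      have ha : 0 ≤ (w₁-x)*(x-w₂) := mul_nonneg (by linarith) (by linarith)
      have hb : 0 ≤ (x-w₃)*(x-w₄) := mul_nonneg (by linarith) (by linarith)
      nlinarith [mul_nonneg ha hb]
    have hV32 := mono_eval F p hdF h23 hsign32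
    have hV34 := anti_eval F p hdF h34 hsign43
    have hV12 := anti_eval F p hdF h12 hsign21
    have hV14 : F.eval w₁ ≤ F.eval w₄ := by
      have hdiff := F0_diff w₁ w₂ w₃ w₄
      have hcube : 0 < (w₁-w₄)^3 := pow_pos (by linarith) 3
      rw [← hF] at hdiff
      nlinarith [mul_nonneg hcube.le hcond]
    have hroots : p.roots = ({w₁} + {w₂} + {w₃}) + {w₄} := by
      have n1 : (X - C w₁ : Polynomial ℝ) ≠ 0 := X_sub_C_ne_zero w₁
      have n2 : (X - C w₂ : Polynomial ℝ) ≠ 0 := X_sub_C_ne_zero w₂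
      have n3 : (X - C w₃ : Polynomial ℝ) ≠ 0 := X_sub_C_ne_zero w₃
      have n4 : (X - C w₄ : Polynomial ℝ) ≠ 0 := X_sub_C_ne_zero w₄
      rw [hp, roots_mul (mul_ne_zero (mul_ne_zero (mul_ne_zero n1 n2) n3) n4),
        roots_mul (mul_ne_zero (mul_ne_zero n1 n2) n3), roots_mul (mul_ne_zero n1 n2),
        roots_X_sub_C, roots_X_sub_C, roots_X_sub_C, roots_X_sub_C]
    rcases le_or_gt (F.eval w₁) (F.eval w₃) with hXY | hXY
    · -- Branch X : use c = -F(w₃)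
      set P := F + C (-(F.eval w₃)) with hPdef
      have hdP : derivative P = p := by rw [hPdef, derivative_add, derivative_C, add_zero, hdF]
      have hnd : P.natDegree = 5 := by rw [hPdef, hF]; exact F0_natDegree _ _ _ _ _
      have hPne : P ≠ 0 := by
        intro h
        rw [h, natDegree_zero] at hnd
        norm_num at hnd
      have hlc5 : P.leadingCoeff = 1/5 := by
        rw [Polynomial.leadingCoeff, hnd, hPdef, hF]; exact F0_coeff5 _ _ _ _ _
      have hlcpos : 0 < P.leadingCoeff := by rw [hlc5]; norm_num
      have hyp_of : 5 ≤ Multiset.card P.roots → ∃ P' : Polynomial ℝ,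
          derivative P' = p ∧ Hyperbolic P' := fun h =>
        ⟨P, hdP, hyperbolic_of_card P hPne (by rw [hnd]; exact h)⟩
      have hev : ∀ x, P.eval x = F.eval x - F.eval w₃ := by
        intro x
        rw [hPdef]
        simp only [eval_add, eval_C]
        ring
      have hP3 : P.eval w₃ = 0 := by rw [hev]; ring
      have hP1 : P.eval w₁ ≤ 0 := by rw [hev]; linarith
      have hP2 : 0 ≤ P.eval w₂ := by rw [hev]; linarith
      have hP4 : 0 ≤ P.eval w₄ := by rw [hev]; linarith
      rcases h23.eq_or_lt with hB | hB
      · rcases h12.eq_or_lt with hC | hC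
        · -- w₃ = w₂ = w₁
          have hm : 3 ≤ p.roots.count w₃ := by
            rw [hroots]
            simp only [Multiset.count_add, Multiset.count_singleton, hB, hC]
            split_ifs <;> omega
          have hcl := cluster_count P p hdP hPne hP3 hm
          obtain ⟨x, hx1, hx2⟩ := exists_bot P hnd hlcpos w₄
          obtain ⟨r₀, hr₀m, hr₀⟩ := poly_ivt P hx1.le hx2.le hP4
          have hord : r₀ < w₃ := by
            have := hr₀m.2
            rw [hB, hC]
            linarith
          have hcount := sum_counts_le_card [(r₀,1),(w₃,4)] P.roots
            (pw2 _ _ (ne_of_lt hord))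
            (by
              intro u hu
              fin_cases hu
              · exact simple_count P hPne hr₀
              · exact hcl)
          exact hyp_of (by simpa using hcount)
        · -- w₃ = w₂ < w₁
          rcases hP1.lt_or_eq with hP1lt | hP1eq
          · obtain ⟨y, hy1, hy2⟩ := exists_top P hnd hlcpos w₁
            obtain ⟨r₂, hr₂m, hr₂⟩ := poly_ivt P hy1.le hP1 hy2.le
            have hr₂gt : w₁ < r₂ := by
              rcases hr₂m.1.eq_or_lt with h | h
              · exfalso; rw [← h] at hr₂; linarith
              · exact h
            rcases h34.eq_or_lt with hA | hA
            · have hA' : w₄ = w₂ := hA.trans hB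
              have hm : 3 ≤ p.roots.count w₃ := by
                rw [hroots]
                simp only [Multiset.count_add, Multiset.count_singleton, hB, hA']
                split_ifs <;> omega
              have hcl := cluster_count P p hdP hPne hP3 hm
              have hcount := sum_counts_le_card [(w₃,4),(r₂,1)] P.roots
                (pw2 _ _ (by show w₃ ≠ r₂; rw [hB]; exact ne_of_lt (by linarith)))
                (by
                  intro u hu
                  fin_cases hu
                  · exact hcl
                  · exact simple_count P hPne hr₂)
              exact hyp_of (by simpa using hcount)
            · have hm : 2 ≤ p.roots.count w₃ := by
                rw [hroots]
                simp only [Multiset.count_add, Multiset.count_singleton, hB]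
                split_ifs <;> omega
              have hcl := cluster_count P p hdP hPne hP3 hm
              obtain ⟨x, hx1, hx2⟩ := exists_bot P hnd hlcpos w₄
              obtain ⟨r₀, hr₀m, hr₀⟩ := poly_ivt P hx1.le hx2.le hP4
              have hcount := sum_counts_le_card [(r₀,1),(w₃,3),(r₂,1)] P.roots
                (pw3 _ _ _ (ne_of_lt (by linarith [hr₀m.2])) (ne_of_lt (by linarith [hr₀m.2]))
                  (by show w₃ ≠ r₂; rw [hB]; exact ne_of_lt (by linarith)))
                (by
                  intro u hu
                  fin_cases hu
                  · exact simple_count P hPne hr₀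
                  · exact hcl
                  · exact simple_count P hPne hr₂)
              exact hyp_of (by simpa using hcount)
          · have hm1 : 1 ≤ p.roots.count w₁ := by
              rw [hroots]
              simp only [Multiset.count_add, Multiset.count_singleton]
              split_ifs <;> omega
            have hcl1 := cluster_count P p hdP hPne hP1eq hm1
            have hm3 : 2 ≤ p.roots.count w₃ := by
              rw [hroots]
              simp only [Multiset.count_add, Multiset.count_singleton, hB]
              split_ifs <;> omega
            have hcl3 := cluster_count P p hdP hPne hP3 hm3
            have hcount := sum_counts_le_card [(w₃,3),(w₁,2)] P.roots
              (pw2 _ _ (by show w₃ ≠ w₁; rw [hB]; exact ne_of_lt hC))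
              (by
                intro u hu
                fin_cases hu
                · exact hcl3
                · exact hcl1)
            exact hyp_of (by simpa using hcount)
      · -- w₃ < w₂
        rcases hP1.lt_or_eq with hP1lt | hP1eq
        · obtain ⟨y, hy1, hy2⟩ := exists_top P hnd hlcpos w₁
          obtain ⟨r₂, hr₂m, hr₂⟩ := poly_ivt P hy1.le hP1 hy2.le
          have hr₂gt : w₁ < r₂ := by
            rcases hr₂m.1.eq_or_lt with h | h
            · exfalso; rw [← h] at hr₂; linarith
            · exact h
          obtain ⟨r₁, hr₁m, hr₁⟩ := poly_ivt' P h12 hP2 hP1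
          have hr₁lt : r₁ < w₁ := by
            rcases hr₁m.2.eq_or_lt with h | h
            · exfalso; rw [h] at hr₁; linarith
            · exact h
          rcases h34.eq_or_lt with hA | hA
          · have hm : 2 ≤ p.roots.count w₃ := by
              rw [hroots]
              simp only [Multiset.count_add, Multiset.count_singleton, ← hA]
              split_ifs <;> omega
            have hcl := cluster_count P p hdP hPne hP3 hm
            have hcount := sum_counts_le_card [(w₃,3),(r₁,1),(r₂,1)] P.roots
              (pw3 _ _ _ (ne_of_lt (by linarith [hr₁m.1])) (ne_of_lt (by linarith))
                (ne_of_lt (by linarith)))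
              (by
                intro u hu
                fin_cases hu
                · exact hcl
                · exact simple_count P hPne hr₁
                · exact simple_count P hPne hr₂)
            exact hyp_of (by simpa using hcount)
          · have hm : 1 ≤ p.roots.count w₃ := by
              rw [hroots]
              simp only [Multiset.count_add, Multiset.count_singleton]
              split_ifs <;> omega
            have hcl := cluster_count P p hdP hPne hP3 hm
            obtain ⟨x, hx1, hx2⟩ := exists_bot P hnd hlcpos w₄
            obtain ⟨r₀, hr₀m, hr₀⟩ := poly_ivt P hx1.le hx2.le hP4
            have hcount := sum_counts_le_card [(r₀,1),(w₃,2),(r₁,1),(r₂,1)] P.roots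
              (pw4 _ _ _ _ (ne_of_lt (by linarith [hr₀m.2])) (ne_of_lt (by linarith [hr₀m.2, hr₁m.1]))
                (ne_of_lt (by linarith [hr₀m.2])) (ne_of_lt (by linarith [hr₁m.1]))
                (ne_of_lt (by linarith)) (ne_of_lt (by linarith)))
              (by
                intro u hu
                fin_cases hu
                · exact simple_count P hPne hr₀
                · exact hcl
                · exact simple_count P hPne hr₁
                · exact simple_count P hPne hr₂)
            exact hyp_of (by simpa using hcount)
        · rcases h12.eq_or_lt with hC | hC
          · have hm1 : 2 ≤ p.roots.count w₁ := by
              rw [hroots]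
              simp only [Multiset.count_add, Multiset.count_singleton, hC]
              split_ifs <;> omega
            have hcl1 := cluster_count P p hdP hPne hP1eq hm1
            have hm3 : 1 ≤ p.roots.count w₃ := by
              rw [hroots]
              simp only [Multiset.count_add, Multiset.count_singleton]
              split_ifs <;> omega
            have hcl3 := cluster_count P p hdP hPne hP3 hm3
            have hcount := sum_counts_le_card [(w₃,2),(w₁,3)] P.roots
              (pw2 _ _ (ne_of_lt (by linarith)))
              (by
                intro u hu
                fin_cases hu
                · exact hcl3
                · exact hcl1)
            exact hyp_of (by simpa using hcount)
          · rcases h34.eq_or_lt with hA | hA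
            · have hm1 : 1 ≤ p.roots.count w₁ := by
                rw [hroots]
                simp only [Multiset.count_add, Multiset.count_singleton]
                split_ifs <;> omega
              have hcl1 := cluster_count P p hdP hPne hP1eq hm1
              have hm3 : 2 ≤ p.roots.count w₃ := by
                rw [hroots]
                simp only [Multiset.count_add, Multiset.count_singleton, ← hA]
                split_ifs <;> omega
              have hcl3 := cluster_count P p hdP hPne hP3 hm3
              have hcount := sum_counts_le_card [(w₃,3),(w₁,2)] P.roots
                (pw2 _ _ (ne_of_lt (by linarith)))
                (by
                  intro u hu
                  fin_cases hu
                  · exact hcl3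
                  · exact hcl1)
              exact hyp_of (by simpa using hcount)
            · have hm1 : 1 ≤ p.roots.count w₁ := by
                rw [hroots]
                simp only [Multiset.count_add, Multiset.count_singleton]
                split_ifs <;> omega
              have hcl1 := cluster_count P p hdP hPne hP1eq hm1
              have hm3 : 1 ≤ p.roots.count w₃ := by
                rw [hroots]
                simp only [Multiset.count_add, Multiset.count_singleton]
                split_ifs <;> omega
              have hcl3 := cluster_count P p hdP hPne hP3 hm3
              obtain ⟨x, hx1, hx2⟩ := exists_bot P hnd hlcpos w₄
              obtain ⟨r₀, hr₀m, hr₀⟩ := poly_ivt P hx1.le hx2.le hP4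
              have hcount := sum_counts_le_card [(r₀,1),(w₃,2),(w₁,2)] P.roots
                (pw3 _ _ _ (ne_of_lt (by linarith [hr₀m.2])) (ne_of_lt (by linarith [hr₀m.2]))
                  (ne_of_lt (by linarith)))
                (by
                  intro u hu
                  fin_cases hu
                  · exact simple_count P hPne hr₀
                  · exact hcl3
                  · exact hcl1)
              exact hyp_of (by simpa using hcount)
    · -- Branch Y : use c = -F(w₁)
      set P := F + C (-(F.eval w₁)) with hPdef
      have hdP : derivative P = p := by rw [hPdef, derivative_add, derivative_C, add_zero, hdF]
      have hnd : P.natDegree = 5 := by rw [hPdef, hF]; exact F0_natDegree _ _ _ _ _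
      have hPne : P ≠ 0 := by
        intro h
        rw [h, natDegree_zero] at hnd
        norm_num at hnd
      have hlc5 : P.leadingCoeff = 1/5 := by
        rw [Polynomial.leadingCoeff, hnd, hPdef, hF]; exact F0_coeff5 _ _ _ _ _
      have hlcpos : 0 < P.leadingCoeff := by rw [hlc5]; norm_num
      have hyp_of : 5 ≤ Multiset.card P.roots → ∃ P' : Polynomial ℝ,
          derivative P' = p ∧ Hyperbolic P' := fun h =>
        ⟨P, hdP, hyperbolic_of_card P hPne (by rw [hnd]; exact h)⟩
      have hev : ∀ x, P.eval x = F.eval x - F.eval w₁ := by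
        intro x
        rw [hPdef]
        simp only [eval_add, eval_C]
        ring
      have hP1 : P.eval w₁ = 0 := by rw [hev]; ring
      have hP3 : P.eval w₃ < 0 := by rw [hev]; linarith
      have hP2 : 0 ≤ P.eval w₂ := by rw [hev]; linarith
      have hP4 : 0 ≤ P.eval w₄ := by rw [hev]; linarith
      have hw43 : w₄ < w₃ := by
        rcases h34.eq_or_lt with h | h
        · exfalso; rw [h] at hP4; linarith
        · exact h
      have hw32 : w₃ < w₂ := by
        rcases h23.eq_or_lt with h | h
        · exfalso; rw [← h] at hP2; linarith
        · exact h
      rcases h12.eq_or_lt with hC | hC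
      · have hm1 : 2 ≤ p.roots.count w₁ := by
          rw [hroots]
          simp only [Multiset.count_add, Multiset.count_singleton, hC]
          split_ifs <;> omega
        have hcl1 := cluster_count P p hdP hPne hP1 hm1
        rcases hP4.eq_or_lt with hP4eq | hP4lt
        · have hm4 : 1 ≤ p.roots.count w₄ := by
            rw [hroots]
            simp only [Multiset.count_add, Multiset.count_singleton]
            split_ifs <;> omega
          have hcl4 := cluster_count P p hdP hPne hP4eq.symm hm4
          have hcount := sum_counts_le_card [(w₄,2),(w₁,3)] P.roots
            (pw2 _ _ (ne_of_lt (by linarith)))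
            (by
              intro u hu
              fin_cases hu
              · exact hcl4
              · exact hcl1)
          exact hyp_of (by simpa using hcount)
        · obtain ⟨rb, hrbm, hrb⟩ := poly_ivt' P h34 hP4lt.le hP3.le
          have hrblt : rb < w₃ := by
            rcases hrbm.2.eq_or_lt with h | h
            · exfalso; rw [h] at hrb; linarith
            · exact h
          obtain ⟨x, hx1, hx2⟩ := exists_bot P hnd hlcpos w₄
          obtain ⟨ra, hram, hra⟩ := poly_ivt P hx1.le hx2.le hP4
          have hralt : ra < w₄ := by
            rcases hram.2.eq_or_lt with h | h
            · exfalso; rw [h] at hra; linarith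
            · exact h
          have hcount := sum_counts_le_card [(ra,1),(rb,1),(w₁,3)] P.roots
            (pw3 _ _ _ (ne_of_lt (by linarith [hrbm.1])) (ne_of_lt (by linarith))
              (ne_of_lt (by linarith)))
            (by
              intro u hu
              fin_cases hu
              · exact simple_count P hPne hra
              · exact simple_count P hPne hrb
              · exact hcl1)
          exact hyp_of (by simpa using hcount)
      · have hm1 : 1 ≤ p.roots.count w₁ := by
          rw [hroots]
          simp only [Multiset.count_add, Multiset.count_singleton]
          split_ifs <;> omega
        have hcl1 := cluster_count P p hdP hPne hP1 hm1
        obtain ⟨rc, hrcm, hrc⟩ := poly_ivt P h23 hP3.le hP2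
        have hrcgt : w₃ < rc := by
          rcases hrcm.1.eq_or_lt with h | h
          · exfalso; rw [← h] at hrc; linarith
          · exact h
        rcases hP4.eq_or_lt with hP4eq | hP4lt
        · have hm4 : 1 ≤ p.roots.count w₄ := by
            rw [hroots]
            simp only [Multiset.count_add, Multiset.count_singleton]
            split_ifs <;> omega
          have hcl4 := cluster_count P p hdP hPne hP4eq.symm hm4
          have hcount := sum_counts_le_card [(w₄,2),(rc,1),(w₁,2)] P.roots
            (pw3 _ _ _ (ne_of_lt (by linarith)) (ne_of_lt (by linarith))
              (ne_of_lt (by linarith [hrcm.2])))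
            (by
              intro u hu
              fin_cases hu
              · exact hcl4
              · exact simple_count P hPne hrc
              · exact hcl1)
          exact hyp_of (by simpa using hcount)
        · obtain ⟨rb, hrbm, hrb⟩ := poly_ivt' P h34 hP4lt.le hP3.le
          have hrblt : rb < w₃ := by
            rcases hrbm.2.eq_or_lt with h | h
            · exfalso; rw [h] at hrb; linarith
            · exact h
          obtain ⟨x, hx1, hx2⟩ := exists_bot P hnd hlcpos w₄
          obtain ⟨ra, hram, hra⟩ := poly_ivt P hx1.le hx2.le hP4
          have hralt : ra < w₄ := by
            rcases hram.2.eq_or_lt with h | h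
            · exfalso; rw [h] at hra; linarith
            · exact h
          have hcount := sum_counts_le_card [(ra,1),(rb,1),(rc,1),(w₁,2)] P.roots
            (pw4 _ _ _ _ (ne_of_lt (by linarith [hrbm.1])) (ne_of_lt (by linarith))
              (ne_of_lt (by linarith)) (ne_of_lt (by linarith)) (ne_of_lt (by linarith))
              (ne_of_lt (by linarith [hrcm.2])))
            (by
              intro u hu
              fin_cases hu
              · exact simple_count P hPne hra
              · exact simple_count P hPne hrb
              · exact simple_count P hPne hrc
              · exact hcl1)
          exact hyp_of (by simpa using hcount)

end Stmt8Aux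

theorem stmt_8 (w₁ w₂ w₃ w₄ : ℝ) (h12 : w₂ ≤ w₁) (h23 : w₃ ≤ w₂) (h34 : w₄ ≤ w₃)
    (p : Polynomial ℝ)
    (hp : p = (X - C w₁) * (X - C w₂) * (X - C w₃) * (X - C w₄)) :
    (∃ P : Polynomial ℝ, derivative P = p ∧ Hyperbolic P) ↔
      0 ≤ 5 * (2 * w₂ - w₁ - w₄) * (2 * w₃ - w₁ - w₄) + (w₁ - w₄) ^ 2 := by
  constructor
  · rintro ⟨P, hd, hH⟩
    exact Stmt8Aux.forward w₁ w₂ w₃ w₄ h12 h23 h34 p hp P hd hH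
  · intro hcond
    exact Stmt8Aux.backward w₁ w₂ w₃ w₄ h12 h23 h34 p hp hcond
end

section
/- Let n ≥ 1, let Q be a monic real polynomial of degree n + 1, and let w_1 ≥ w_2 ≥ ... ≥ w_n be real numbers such that Q'(x) = (n+1)·∏_{j=1}^{n} (x - w_j). If Q(w_j) ≥ 0 for every even j ∈ {1, ..., n} and Q(w_j) ≤ 0 for every odd j ∈ {1, ..., n}, then all complex roots of Q are real. -/
open Polynomial

lemma ivt_root (Q : Polynomial ℝ) {a b : ℝ} (hab : a ≤ b) (h : Q.eval a * Q.eval b ≤ 0) :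
    ∃ c, a ≤ c ∧ c ≤ b ∧ Q.eval c = 0 := by
  have hc : ContinuousOn (fun x => Q.eval x) (Set.Icc a b) := (Polynomial.continuous Q).continuousOn
  by_cases ha0 : Q.eval a = 0
  · exact ⟨a, le_refl a, hab, ha0⟩
  rcases lt_or_gt_of_ne ha0 with ha | ha
  · have hb : 0 ≤ Q.eval b := by nlinarith
    have : (0:ℝ) ∈ Set.Icc (Q.eval a) (Q.eval b) := ⟨ha.le, hb⟩
    obtain ⟨c, hc1, hc2⟩ := intermediate_value_Icc hab hc this
    exact ⟨c, hc1.1, hc1.2, hc2⟩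
  · have hb : Q.eval b ≤ 0 := by nlinarith
    have : (0:ℝ) ∈ Set.Icc (Q.eval b) (Q.eval a) := ⟨hb, ha.le⟩
    obtain ⟨c, hc1, hc2⟩ := intermediate_value_Icc' hab hc this
    exact ⟨c, hc1.1, hc1.2, hc2⟩

theorem stmt_10 (n : ℕ) (hn : 1 ≤ n) (Q : Polynomial ℝ)
    (hQmonic : Q.Monic) (hQdeg : Q.natDegree = n + 1)
    (w : ℕ → ℝ) (hw : ∀ i ∈ Finset.Ico 1 n, w (i + 1) ≤ w i)
    (hQ' : derivative Q = C ((n : ℝ) + 1) * ∏ j ∈ Finset.Icc 1 n, (X - C (w j)))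
    (heven : ∀ j ∈ Finset.Icc 1 n, Even j → 0 ≤ Q.eval (w j))
    (hodd : ∀ j ∈ Finset.Icc 1 n, Odd j → Q.eval (w j) ≤ 0) :
    Hyperbolic Q := by
  classical
  have hQ0 : Q ≠ 0 := hQmonic.ne_zero
  -- monotonicity of w
  have wmono : ∀ i j : ℕ, 1 ≤ i → i ≤ j → j ≤ n → w j ≤ w i := by
    intro i j h1 hij
    induction j, hij using Nat.le_induction with
    | base => intro _; exact le_refl _
    | succ j hij ih =>
      intro hj
      exact le_trans (hw j (Finset.mem_Ico.mpr ⟨le_trans h1 hij, by omega⟩)) (ih (by omega))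
  -- sign condition
  have hsign : ∀ j, 1 ≤ j → j ≤ n → 0 ≤ (-1:ℝ)^j * Q.eval (w j) := by
    intro j h1 h2
    rcases Nat.even_or_odd j with he | ho
    · rw [he.neg_one_pow, one_mul]
      exact heven j (Finset.mem_Icc.mpr ⟨h1, h2⟩) he
    · rw [ho.neg_one_pow]
      have := hodd j (Finset.mem_Icc.mpr ⟨h1, h2⟩) ho
      nlinarith
  -- top endpoint
  have hdegpos : 0 < Q.degree := by
    rw [← Polynomial.natDegree_pos_iff_degree_pos]; omega
  have htop : Filter.Tendsto (fun x => Q.eval x) Filter.atTop Filter.atTop :=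
    Polynomial.tendsto_atTop_of_leadingCoeff_nonneg Q hdegpos (by rw [hQmonic.leadingCoeff]; norm_num)
  obtain ⟨b, hb0, hbw⟩ := ((htop.eventually_ge_atTop 0).and (Filter.eventually_ge_atTop (w 1))).exists
  -- bottom endpoint
  have hQn : ∃ a, a ≤ w n ∧ 0 ≤ (-1:ℝ)^(n+1) * Q.eval a := by
    set P2 : Polynomial ℝ := C ((-1:ℝ)^(n+1)) * Q.comp (-X) with hP2
    have hcompdeg : (Q.comp (-X : Polynomial ℝ)).natDegree = n + 1 := by
      rw [natDegree_comp]
      simp [hQdeg]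
    have hcomplc : (Q.comp (-X : Polynomial ℝ)).leadingCoeff = (-1:ℝ)^(n+1) := by
      rw [leadingCoeff_comp (by simp)]
      simp [hQmonic.leadingCoeff, hQdeg]
    have hne : ((-1:ℝ)^(n+1)) ≠ 0 := by positivity
    have hP2deg : 0 < P2.degree := by
      rw [hP2, degree_C_mul hne, ← natDegree_pos_iff_degree_pos]
      omega
    have hP2lc : 0 ≤ P2.leadingCoeff := by
      rw [hP2, leadingCoeff_mul, leadingCoeff_C, hcomplc]
      have : ((-1:ℝ)^(n+1)) * ((-1:ℝ)^(n+1)) = 1 := by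
        rw [← mul_pow]; norm_num
      rw [this]; norm_num
    have h2 : Filter.Tendsto (fun x => P2.eval x) Filter.atTop Filter.atTop :=
      Polynomial.tendsto_atTop_of_leadingCoeff_nonneg P2 hP2deg hP2lc
    obtain ⟨x, hx0, hxw⟩ := ((h2.eventually_ge_atTop 0).and (Filter.eventually_ge_atTop (-(w n)))).exists
    refine ⟨-x, by linarith, ?_⟩
    have : P2.eval x = (-1:ℝ)^(n+1) * Q.eval (-x) := by
      rw [hP2]; simp [eval_comp]
    linarith [this ▸ hx0]
  obtain ⟨a, haw, ha0⟩ := hQn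
  -- roots in each interval
  have hex : ∀ j : ℕ, ∃ c, j ≤ n →
      Q.eval c = 0 ∧ (1 ≤ j → c ≤ w j) ∧ (j < n → w (j + 1) ≤ c) := by
    intro j
    by_cases hj : j ≤ n
    · rcases Nat.eq_zero_or_pos j with rfl | hj1
      · -- interval [w 1, b]
        have h1 : Q.eval (w 1) ≤ 0 := hodd 1 (Finset.mem_Icc.mpr ⟨le_refl 1, hn⟩) ⟨0, by norm_num⟩
        obtain ⟨c, hc1, hc2, hc3⟩ := ivt_root Q hbw (mul_nonpos_of_nonpos_of_nonneg h1 hb0)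
        exact ⟨c, fun _ => ⟨hc3, by omega, fun _ => hc1⟩⟩
      by_cases hjn : j < n
      · -- middle interval [w (j+1), w j]
        have hs1 := hsign j hj1 hj
        have hs2 := hsign (j+1) (by omega) (by omega)
        have he2 : ((-1:ℝ)^j) * ((-1:ℝ)^j) = 1 := by rw [← mul_pow]; norm_num
        have hprod : Q.eval (w (j+1)) * Q.eval (w j) ≤ 0 := by
          have : (-1:ℝ)^(j+1) = -((-1:ℝ)^j) := by rw [pow_succ]; ring
          rw [this] at hs2
          nlinarith
        have hle : w (j+1) ≤ w j := hw j (Finset.mem_Ico.mpr ⟨hj1, hjn⟩)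
        obtain ⟨c, hc1, hc2, hc3⟩ := ivt_root Q hle hprod
        exact ⟨c, fun _ => ⟨hc3, fun _ => hc2, fun _ => hc1⟩⟩
      · -- bottom interval [a, w n]
        have hjeq : j = n := by omega
        subst hjeq
        have hs1 := hsign j hj1 (le_refl j)
        have he2 : ((-1:ℝ)^j) * ((-1:ℝ)^j) = 1 := by rw [← mul_pow]; norm_num
        have hprod : Q.eval a * Q.eval (w j) ≤ 0 := by
          have : (-1:ℝ)^(j+1) = -((-1:ℝ)^j) := by rw [pow_succ]; ring
          rw [this] at ha0
          nlinarith
        obtain ⟨c, hc1, hc2, hc3⟩ := ivt_root Q haw hprod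
        exact ⟨c, fun _ => ⟨hc3, fun _ => hc2, fun hlt => absurd hlt hjn⟩⟩
    · exact ⟨0, fun h => absurd h hj⟩
  choose r hr using hex
  have hroot : ∀ j, j ≤ n → Q.eval (r j) = 0 := fun j hj => (hr j hj).1
  have hrle : ∀ j, 1 ≤ j → j ≤ n → r j ≤ w j := fun j h1 hj => (hr j hj).2.1 h1
  have hrge : ∀ j, j < n → w (j+1) ≤ r j := fun j hj => (hr j (le_of_lt hj)).2.2 hj
  -- roots of the derivative
  have hnC : ((n:ℝ)+1) ≠ 0 := by positivity
  have hrootsQ' : (derivative Q).roots = (Finset.Icc 1 n).val.map w := by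
    have h1 : ∏ j ∈ Finset.Icc 1 n, (X - C (w j))
        = (((Finset.Icc 1 n).val.map w).map fun a => X - C a).prod := by
      rw [Multiset.map_map]; rfl
    rw [hQ', roots_C_mul _ hnC, h1, roots_multiset_prod_X_sub_C]
  -- the multiset of constructed roots
  set R : Multiset ℝ := (Finset.range (n+1)).val.map r with hR
  have hcount : ∀ v : ℝ, R.count v ≤ rootMultiplicity v Q := by
    intro v
    set s : Finset ℕ := (Finset.range (n+1)).filter (fun j => r j = v) with hs
    have hcR : R.count v = s.card := by
      rw [hR, Multiset.count_map, hs, Finset.card_filter, Finset.sum_boole]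
      simp [eq_comm, Finset.filter]
    rcases s.eq_empty_or_nonempty with hse | hne'
    · rw [hcR, hse]; simp
    obtain ⟨j₀, hj₀⟩ := hne'
    rw [hs, Finset.mem_filter, Finset.mem_range] at hj₀
    have hvroot : Q.IsRoot v := by
      have := hroot j₀ (by omega)
      rwa [hj₀.2] at this
    have hmult1 : 1 ≤ rootMultiplicity v Q := (rootMultiplicity_pos hQ0).mpr hvroot
    by_cases hc2 : s.card ≤ 1
    · omega
    -- now s.card ≥ 2
    have hne' : s.Nonempty := ⟨j₀, by rw [hs, Finset.mem_filter, Finset.mem_range]; exact hj₀⟩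
    set j₁ := s.min' hne' with hj₁def
    set j₂ := s.max' hne' with hj₂def
    have hj12 : j₁ < j₂ := Finset.min'_lt_max'_of_card s (by omega)
    have hj₁mem := Finset.mem_filter.mp (s.min'_mem hne')
    have hj₂mem := Finset.mem_filter.mp (s.max'_mem hne')
    have hj₁n : j₁ < n + 1 := Finset.mem_range.mp hj₁mem.1
    have hj₂n' : j₂ < n + 1 := Finset.mem_range.mp hj₂mem.1
    have hj₂n : j₂ ≤ n := by omega
    have hsub : Finset.Icc (j₁+1) j₂ ⊆ (Finset.Icc 1 n).filter (fun i => w i = v) := by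
      intro i hi
      rw [Finset.mem_Icc] at hi
      rw [Finset.mem_filter, Finset.mem_Icc]
      refine ⟨⟨by omega, by omega⟩, le_antisymm ?_ ?_⟩
      · calc w i ≤ w (j₁+1) := wmono (j₁+1) i (by omega) hi.1 (by omega)
          _ ≤ r j₁ := hrge j₁ (by omega)
          _ = v := hj₁mem.2
      · calc v = r j₂ := hj₂mem.2.symm
          _ ≤ w j₂ := hrle j₂ (by omega) hj₂n
          _ ≤ w i := wmono i j₂ (by omega) hi.2 hj₂n
    have hscard : s.card ≤ j₂ - j₁ + 1 := by
      have hsub2 : s ⊆ Finset.Icc j₁ j₂ := by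
        intro i hi
        rw [Finset.mem_Icc]
        exact ⟨s.min'_le i hi, s.le_max' i hi⟩
      have := Finset.card_le_card hsub2
      rw [Nat.card_Icc] at this
      omega
    have htcard : j₂ - j₁ ≤ ((Finset.Icc 1 n).filter (fun i => w i = v)).card := by
      have := Finset.card_le_card hsub
      rw [Nat.card_Icc] at this
      omega
    have hmultQ' : rootMultiplicity v (derivative Q)
        = ((Finset.Icc 1 n).filter (fun i => w i = v)).card := by
      rw [← count_roots, hrootsQ', Multiset.count_map, Finset.card_filter, Finset.sum_boole]
      simp [eq_comm, Finset.filter]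
    have hder := derivative_rootMultiplicity_of_root hvroot
    omega
  have hRle : R ≤ Q.roots := by
    rw [Multiset.le_iff_count]
    intro v
    rw [count_roots]
    exact hcount v
  have hcard : Multiset.card Q.roots = n + 1 := by
    have h1 : Multiset.card Q.roots ≤ n + 1 := by
      have := Q.card_roots' 
      omega
    have h2 := Multiset.card_le_card hRle
    rw [hR] at h2
    simp at h2
    omega
  have hsplits : Q.Splits := by
    rw [splits_iff_card_roots, hcard, hQdeg]
  intro z hz
  rw [hsplits.roots_map (algebraMap ℝ ℂ)] at hz
  obtain ⟨x, _, hx⟩ := Multiset.mem_map.mp hz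
  rw [← hx]
  simp
end

section
/- Let n ≥ 1, let Q be a monic real polynomial of degree n + 1 all of whose complex roots are real, and let w_1 ≥ w_2 ≥ ... ≥ w_n be real numbers such that Q'(x) = (n+1)·∏_{j=1}^{n} (x - w_j). Then Q(w_j) ≥ 0 for every even j ∈ {1, ..., n} and Q(w_j) ≤ 0 for every odd j ∈ {1, ..., n}. -/
open Polynomial

private lemma multiset_prod_pos {m : Multiset ℝ} (h : ∀ x ∈ m, 0 < x) : 0 < m.prod := by
  induction m using Multiset.induction with
  | empty => simp
  | cons a s ih =>
    simp only [Multiset.prod_cons]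
    exact mul_pos (h a (Multiset.mem_cons_self a s))
      (ih fun x hx => h x (Multiset.mem_cons_of_mem hx))

private lemma sum_count_le (s : Finset ℝ) (m : Multiset ℝ) :
    ∑ x ∈ s, m.count x ≤ Multiset.card m := by
  classical
  calc ∑ x ∈ s, m.count x
      = ∑ x ∈ s ∩ m.toFinset, m.count x + ∑ x ∈ s \ m.toFinset, m.count x :=
        (Finset.sum_inter_add_sum_sdiff s m.toFinset _).symm
    _ = ∑ x ∈ s ∩ m.toFinset, m.count x := by
        have h0 : ∑ x ∈ s \ m.toFinset, m.count x = 0 :=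
          Finset.sum_eq_zero fun x hx => Multiset.count_eq_zero.2
            (fun hmem => (Finset.mem_sdiff.1 hx).2 (Multiset.mem_toFinset.2 hmem))
        rw [h0, add_zero]
    _ ≤ ∑ x ∈ m.toFinset, m.count x :=
        Finset.sum_le_sum_of_subset (Finset.inter_subset_right)
    _ = Multiset.card m := Multiset.toFinset_sum_count_eq m

/-- Localized Rolle counting: the number of roots of `p` (with multiplicity) lying in an
order-convex set `P` is at most the number of roots of `p'` in `P` plus one. -/
private lemma filter_card_roots_le_derivative (p : ℝ[X]) (P : ℝ → Prop) [DecidablePred P]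
    (hP : ∀ ⦃x y z : ℝ⦄, P x → P y → x ≤ z → z ≤ y → P z) :
    Multiset.card (p.roots.filter P) ≤ Multiset.card ((derivative p).roots.filter P) + 1 := by
  classical
  rcases eq_or_ne (derivative p) 0 with hp' | hp'
  · rw [eq_C_of_derivative_eq_zero hp', roots_C]
    simp
  have hp : p ≠ 0 := ne_of_apply_ne derivative (by rwa [derivative_zero])
  set m := p.roots.filter P with hm
  set m' := (derivative p).roots.filter P with hm'
  have hA : m.toFinset.card ≤ (m'.toFinset \ m.toFinset).card + 1 := by
    refine Finset.card_le_diff_of_interleaved fun x hx y hy hxy hxy' => ?_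
    rw [Multiset.mem_toFinset, hm, Multiset.mem_filter, mem_roots hp] at hx hy
    obtain ⟨z, hz1, hz2⟩ := exists_deriv_eq_zero hxy p.continuousOn (hx.1.trans hy.1.symm)
    refine ⟨z, ?_, hz1.1, hz1.2⟩
    rw [Multiset.mem_toFinset, hm', Multiset.mem_filter, mem_roots hp', IsRoot, ← p.deriv]
    exact ⟨hz2, hP hx.2 hy.2 hz1.1.le hz1.2.le⟩
  have hPm : ∀ x ∈ m.toFinset, P x := fun x hx =>
    (Multiset.mem_filter.1 (Multiset.mem_toFinset.1 hx)).2
  calc Multiset.card m = ∑ x ∈ m.toFinset, m.count x := (Multiset.toFinset_sum_count_eq _).symm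
    _ = ∑ x ∈ m.toFinset, (m.count x - 1 + 1) :=
        (Finset.sum_congr rfl fun x hx => (tsub_add_cancel_of_le <|
          Nat.succ_le_iff.2 <| Multiset.count_pos.2 <| Multiset.mem_toFinset.1 hx).symm)
    _ = (∑ x ∈ m.toFinset, (m.count x - 1)) + m.toFinset.card := by
        simp only [Finset.sum_add_distrib, Finset.card_eq_sum_ones]
    _ ≤ (∑ x ∈ m.toFinset, m'.count x) + ((m'.toFinset \ m.toFinset).card + 1) := by
        refine add_le_add (Finset.sum_le_sum fun x hx => ?_) hA
        have h1 : m.count x = p.rootMultiplicity x := by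
          rw [hm, Multiset.count_filter_of_pos (hPm x hx), count_roots]
        have h2 : m'.count x = (derivative p).rootMultiplicity x := by
          rw [hm', Multiset.count_filter_of_pos (hPm x hx), count_roots]
        rw [h1, h2]
        exact rootMultiplicity_sub_one_le_derivative_rootMultiplicity p x
    _ ≤ (∑ x ∈ m.toFinset, m'.count x) + ((∑ x ∈ m'.toFinset \ m.toFinset, m'.count x) + 1) := by
        refine add_le_add_right (add_le_add_left ?_ 1) _
        rw [Finset.card_eq_sum_ones]
        refine Finset.sum_le_sum fun x hx => ?_
        exact Nat.succ_le_iff.2 <| Multiset.count_pos.2 <| Multiset.mem_toFinset.1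
          (Finset.mem_sdiff.1 hx).1
    _ = (∑ x ∈ m.toFinset ∪ (m'.toFinset \ m.toFinset), m'.count x) + 1 := by
        rw [Finset.sum_union Finset.disjoint_sdiff, add_assoc]
    _ ≤ Multiset.card m' + 1 := add_le_add_left (sum_count_le _ _) 1

theorem stmt_11 (n : ℕ) (hn : 1 ≤ n) (Q : Polynomial ℝ)
    (hQmonic : Q.Monic) (hQdeg : Q.natDegree = n + 1) (hQhyp : Hyperbolic Q)
    (w : ℕ → ℝ) (hw : ∀ i ∈ Finset.Ico 1 n, w (i + 1) ≤ w i)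
    (hQ' : derivative Q = C ((n : ℝ) + 1) * ∏ j ∈ Finset.Icc 1 n, (X - C (w j))) :
    (∀ j ∈ Finset.Icc 1 n, Even j → 0 ≤ Q.eval (w j)) ∧
      (∀ j ∈ Finset.Icc 1 n, Odd j → Q.eval (w j) ≤ 0) := by
  classical
  have hQne : Q ≠ 0 := hQmonic.ne_zero
  -- w is antitone on [1, n]
  have wmono : ∀ i j : ℕ, 1 ≤ i → i ≤ j → j ≤ n → w j ≤ w i := by
    intro i j h1 hij hjn
    induction j, hij using Nat.le_induction with
    | base => exact le_rfl
    | succ k hik ih =>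
      have hkn : k < n := Nat.lt_of_succ_le hjn
      have h1k : 1 ≤ k := le_trans h1 hik
      exact le_trans (hw k (Finset.mem_Ico.2 ⟨h1k, hkn⟩)) (ih (Nat.le_of_succ_le hjn))
  -- roots of Q' are precisely the multiset of w's
  set s : Multiset ℝ := (Finset.Icc 1 n).val.map w with hs
  have hQ'ne : ((n : ℝ) + 1) ≠ 0 := by positivity
  have hderiv_roots : (derivative Q).roots = s := by
    rw [hQ', roots_C_mul _ hQ'ne]
    have : ∏ j ∈ Finset.Icc 1 n, (X - C (w j)) = (s.map fun a => X - C a).prod := by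
      rw [hs, Multiset.map_map]
      rfl
    rw [this, roots_multiset_prod_X_sub_C]
  have hscard : Multiset.card s = n := by
    rw [hs, Multiset.card_map]
    have : Multiset.card (Finset.Icc 1 n).val = (Finset.Icc 1 n).card := rfl
    rw [this, Nat.card_Icc]
    omega
  -- Q has n+1 real roots with multiplicity
  have hroots_card : Multiset.card Q.roots = n + 1 := by
    have hmapne : Q.map (algebraMap ℝ ℂ) ≠ 0 :=
      (Polynomial.map_ne_zero_iff (algebraMap ℝ ℂ).injective).2 hQne
    have hsplits : (Q.map (algebraMap ℝ ℂ)).Splits :=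
      IsAlgClosed.splits _
    have hcardC : Multiset.card (Q.map (algebraMap ℝ ℂ)).roots = n + 1 := by
      rw [splits_iff_card_roots.1 hsplits, natDegree_map, hQdeg]
    have hle : Q.roots.map (algebraMap ℝ ℂ) ≤ (Q.map (algebraMap ℝ ℂ)).roots :=
      map_roots_le hmapne
    have hge : (Q.map (algebraMap ℝ ℂ)).roots ≤ Q.roots.map (algebraMap ℝ ℂ) := by
      rw [Multiset.le_iff_count]
      intro z
      rcases Nat.eq_zero_or_pos ((Q.map (algebraMap ℝ ℂ)).roots.count z) with h0 | hpos
      · rw [h0]; exact Nat.zero_le _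
      have hzmem : z ∈ (Q.map (algebraMap ℝ ℂ)).roots := Multiset.count_pos.1 hpos
      have hzim : z.im = 0 := hQhyp z hzmem
      have hz : z = (algebraMap ℝ ℂ) z.re := by
        apply Complex.ext <;> simp [hzim]
      rw [hz, Multiset.count_map_eq_count' _ _ (algebraMap ℝ ℂ).injective,
        count_roots, count_roots, ← eq_rootMultiplicity_map (algebraMap ℝ ℂ).injective]
    have := le_antisymm hle hge
    rw [← hcardC, ← this, Multiset.card_map]
  have hsplitsR : Q.Splits := by
    rw [splits_iff_card_roots, hroots_card, hQdeg]
  have hQprod : Q = (Q.roots.map fun a => X - C a).prod :=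
    hsplitsR.eq_prod_roots_of_monic hQmonic
  -- the key sign computation
  have key : ∀ j ∈ Finset.Icc 1 n, Q.eval (w j) ≠ 0 →
      ∃ c : ℝ, 0 < c ∧ Q.eval (w j) = (-1) ^ j * c := by
    intro j hj hne
    rw [Finset.mem_Icc] at hj
    have hwj_notroot : w j ∉ Q.roots := by
      intro hmem
      exact hne ((mem_roots hQne).1 hmem)
    -- choose t' just below w j, above all roots of Q below w j
    set rs : Finset ℝ := Q.roots.toFinset.filter (· < w j) with hrs
    set t' : ℝ := if h : rs.Nonempty then rs.max' h else w j - 1 with ht'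
    have ht'lt : t' < w j := by
      rw [ht']
      split
      · next h => exact (Finset.mem_filter.1 (rs.max'_mem h)).2
      · linarith
    have ht'max : ∀ r ∈ Q.roots, r < w j → r ≤ t' := by
      intro r hr hrlt
      have hrmem : r ∈ rs := Finset.mem_filter.2 ⟨Multiset.mem_toFinset.2 hr, hrlt⟩
      rw [ht', dif_pos ⟨r, hrmem⟩]
      exact rs.le_max' r hrmem
    -- count of roots of Q above w j equals count above t'
    have hfilter_eq : Q.roots.filter (fun r => w j < r) = Q.roots.filter (fun r => t' < r) := by
      refine Multiset.filter_congr fun r hr => ?_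
      constructor
      · intro h; exact lt_trans ht'lt h
      · intro h
        rcases lt_trichotomy r (w j) with hlt | heq | hgt
        · exact absurd (ht'max r hr hlt) (not_le.2 h)
        · exact absurd (heq ▸ hr) hwj_notroot
        · exact hgt
    -- upper bound: a (w j) ≤ j
    have hupper : Multiset.card (Q.roots.filter (fun r => w j < r)) ≤ j := by
      have h1 := filter_card_roots_le_derivative Q (fun r => w j < r)
        (fun x y z hx _ hxz _ => lt_of_lt_of_le hx hxz)
      rw [hderiv_roots] at h1
      have h2 : Multiset.card (s.filter (fun r => w j < r)) ≤ j - 1 := by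
        have : s.filter (fun r => w j < r) = ((Finset.Icc 1 n).val.filter
            (fun i => w j < w i)).map w := by
          rw [hs, Multiset.filter_map]
          rfl
        rw [this, Multiset.card_map]
        have hsub : (Finset.Icc 1 n).filter (fun i => w j < w i) ⊆ Finset.Icc 1 (j - 1) := by
          intro i hi
          rw [Finset.mem_filter, Finset.mem_Icc] at hi
          rw [Finset.mem_Icc]
          refine ⟨hi.1.1, ?_⟩
          by_contra hcon
          push_neg at hcon
          have hij : j ≤ i := by omega
          exact absurd (wmono j i hj.1 hij hi.1.2) (not_le.2 hi.2)
        have := Finset.card_le_card hsub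
        rw [Nat.card_Icc] at this
        calc Multiset.card ((Finset.Icc 1 n).val.filter (fun i => w j < w i))
            = ((Finset.Icc 1 n).filter (fun i => w j < w i)).card := rfl
          _ ≤ j - 1 := by omega
      omega
    -- lower bound: a (w j) ≥ j
    have hlower : j ≤ Multiset.card (Q.roots.filter (fun r => w j < r)) := by
      rw [hfilter_eq]
      have h1 := filter_card_roots_le_derivative Q (fun r => ¬ t' < r)
        (fun x y z _ hy _ hzy => not_lt.2 (le_trans hzy (not_lt.1 hy)))
      rw [hderiv_roots] at h1
      have hQsplit : Multiset.card (Q.roots.filter (fun r => t' < r)) +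
          Multiset.card (Q.roots.filter (fun r => ¬ t' < r)) = n + 1 := by
        rw [← Multiset.card_add, Multiset.filter_add_not, hroots_card]
      have hssplit : Multiset.card (s.filter (fun r => t' < r)) +
          Multiset.card (s.filter (fun r => ¬ t' < r)) = n := by
        rw [← Multiset.card_add, Multiset.filter_add_not, hscard]
      have hblow : j ≤ Multiset.card (s.filter (fun r => t' < r)) := by
        have : s.filter (fun r => t' < r) = ((Finset.Icc 1 n).val.filter
            (fun i => t' < w i)).map w := by
          rw [hs, Multiset.filter_map]
          rfl
        rw [this, Multiset.card_map]
        have hsub : Finset.Icc 1 j ⊆ (Finset.Icc 1 n).filter (fun i => t' < w i) := by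
          intro i hi
          rw [Finset.mem_Icc] at hi
          rw [Finset.mem_filter, Finset.mem_Icc]
          have hin : i ≤ n := le_trans hi.2 hj.2
          refine ⟨⟨hi.1, hin⟩, lt_of_lt_of_le ht'lt (wmono i j hi.1 hi.2 hj.2)⟩
        have := Finset.card_le_card hsub
        rw [Nat.card_Icc] at this
        calc j = (Finset.Icc 1 j).card := by rw [Nat.card_Icc]; omega
          _ ≤ ((Finset.Icc 1 n).filter (fun i => t' < w i)).card := Finset.card_le_card hsub
          _ = Multiset.card ((Finset.Icc 1 n).val.filter (fun i => t' < w i)) := rfl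
      omega
    have haj : Multiset.card (Q.roots.filter (fun r => w j < r)) = j :=
      le_antisymm hupper hlower
    -- sign computation
    refine ⟨((Q.roots.filter (fun r => w j < r)).map (fun a => a - w j)).prod *
      ((Q.roots.filter (fun r => ¬ w j < r)).map (fun a => w j - a)).prod, ?_, ?_⟩
    · apply mul_pos
      · apply multiset_prod_pos
        intro x hx
        obtain ⟨a, ha, rfl⟩ := Multiset.mem_map.1 hx
        have := (Multiset.mem_filter.1 ha).2
        linarith
      · apply multiset_prod_pos
        intro x hx
        obtain ⟨a, ha, rfl⟩ := Multiset.mem_map.1 hx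
        have ha1 := (Multiset.mem_filter.1 ha).1
        have ha2 := (Multiset.mem_filter.1 ha).2
        have hane : a ≠ w j := fun h => hwj_notroot (h ▸ ha1)
        have := not_lt.1 ha2
        cases lt_or_eq_of_le this with
        | inl h => linarith
        | inr h => exact absurd h hane
    · have heval : Q.eval (w j) = (Q.roots.map (fun a => w j - a)).prod := by
        conv_lhs => rw [hQprod]
        rw [eval_multiset_prod, Multiset.map_map]
        congr 1
        apply Multiset.map_congr rfl
        intro a _
        simp
      rw [heval]
      have hsplit2 : Q.roots = Q.roots.filter (fun r => w j < r) +
          Q.roots.filter (fun r => ¬ w j < r) := (Multiset.filter_add_not _ _).symm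
      conv_lhs => rw [hsplit2]
      rw [Multiset.map_add, Multiset.prod_add]
      have hneg : (Q.roots.filter (fun r => w j < r)).map (fun a => w j - a) =
          ((Q.roots.filter (fun r => w j < r)).map (fun a => a - w j)).map Neg.neg := by
        rw [Multiset.map_map]
        apply Multiset.map_congr rfl
        intro a _
        simp
      rw [hneg, Multiset.prod_map_neg, Multiset.card_map, haj]
      ring
  constructor
  · intro j hj hje
    rcases eq_or_ne (Q.eval (w j)) 0 with h0 | hne
    · rw [h0]
    obtain ⟨c, hc, heq⟩ := key j hj hne
    rw [heq, hje.neg_one_pow, one_mul]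
    exact hc.le
  · intro j hj hjo
    rcases eq_or_ne (Q.eval (w j)) 0 with h0 | hne
    · rw [h0]
    obtain ⟨c, hc, heq⟩ := key j hj hne
    rw [heq, hjo.neg_one_pow, neg_one_mul]
    linarith
end

section
/- Every hyperbolic real polynomial of degree at most 3 (i.e. every real polynomial of degree ≤ 3 all of whose complex roots are real) has a hyperbolic antiderivative. -/
open Polynomial

lemma hyp_list (c : ℝ) (L : List ℝ) :
    Hyperbolic (C c * (L.map fun x => X - C x).prod) := by
  intro z hz
  obtain ⟨hne, hroot⟩ := Polynomial.mem_roots'.mp hz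
  by_cases hc : c = 0
  · exfalso; apply hne; simp [hc]
  · simp only [IsRoot, Polynomial.map_mul, Polynomial.map_list_prod, List.map_map,
      Function.comp, Polynomial.map_sub, Polynomial.map_X, Polynomial.map_C,
      eval_mul, eval_C, eval_list_prod, List.map_map] at hroot
    rcases mul_eq_zero.mp hroot with h | h
    · exact absurd (by simpa using h) hc
    · obtain ⟨x, hx, hfx⟩ := List.mem_map.mp (List.prod_eq_zero_iff.mp h)
      simp only [Function.comp_apply, eval_map] at hfx
      have hzx : z = (x : ℂ) := sub_eq_zero.mp (by simpa using hfx)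
      rw [hzx]; exact Complex.ofReal_im x

lemma ex3 (a r s t : ℝ) (h1 : r ≤ s) (h2 : s ≤ t) :
    ∃ P : Polynomial ℝ, derivative P = C a * ((X - C r) * (X - C s) * (X - C t)) ∧ Hyperbolic P := by
  have h3 : (r-s)*(t-s) ≤ 0 := mul_nonpos_of_nonpos_of_nonneg (by linarith) (by linarith)
  have hD : (0:ℝ) ≤ (16/9)*(r+t-2*s)^2 - 8*((r-s)*(t-s)) := by nlinarith [sq_nonneg (r+t-2*s)]
  set d := Real.sqrt ((16/9)*(r+t-2*s)^2 - 8*((r-s)*(t-s))) with hddef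
  have hd : d^2 = (16/9)*(r+t-2*s)^2 - 8*((r-s)*(t-s)) := Real.sq_sqrt hD
  refine ⟨C (a/4) * (List.map (fun x => X - C x)
      [s, s, s+(2/3)*(r+t-2*s)+d/2, s+(2/3)*(r+t-2*s)-d/2]).prod, ?_, hyp_list _ _⟩
  apply Polynomial.funext
  intro x
  simp only [List.map_cons, List.map_nil, List.prod_cons, List.prod_nil, mul_one,
    derivative_mul, derivative_sub, derivative_X, derivative_C, derivative_one,
    eval_mul, eval_add, eval_sub, eval_C, eval_X, eval_one, eval_zero, sub_zero, one_mul, mul_one,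
    zero_mul, mul_zero, zero_sub, zero_add, add_zero]
  linear_combination (-(a*(x-s))/8) * hd

lemma ex2 (a r s : ℝ) :
    ∃ P : Polynomial ℝ, derivative P = C a * ((X - C r) * (X - C s)) ∧ Hyperbolic P := by
  refine ⟨C (a/3) * (List.map (fun x => X - C x) [r, r, (3*s-r)/2]).prod, ?_, hyp_list _ _⟩
  apply Polynomial.funext
  intro x
  simp only [List.map_cons, List.map_nil, List.prod_cons, List.prod_nil, mul_one,
    derivative_mul, derivative_sub, derivative_X, derivative_C, derivative_one,
    eval_mul, eval_add, eval_sub, eval_C, eval_X, eval_one, eval_zero, sub_zero, one_mul, mul_one,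
    zero_mul, mul_zero, zero_sub, zero_add, add_zero]
  ring

lemma ex1 (a r : ℝ) :
    ∃ P : Polynomial ℝ, derivative P = C a * (X - C r) ∧ Hyperbolic P := by
  refine ⟨C (a/2) * (List.map (fun x => X - C x) [r, r]).prod, ?_, hyp_list _ _⟩
  apply Polynomial.funext
  intro x
  simp only [List.map_cons, List.map_nil, List.prod_cons, List.prod_nil, mul_one,
    derivative_mul, derivative_sub, derivative_X, derivative_C, derivative_one,
    eval_mul, eval_add, eval_sub, eval_C, eval_X, eval_one, eval_zero, sub_zero, one_mul, mul_one,
    zero_mul, mul_zero, zero_sub, zero_add, add_zero]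
  ring

lemma ex0 (a : ℝ) :
    ∃ P : Polynomial ℝ, derivative P = C a ∧ Hyperbolic P := by
  refine ⟨C a * (List.map (fun x => X - C x) [0]).prod, ?_, hyp_list _ _⟩
  apply Polynomial.funext
  intro x
  simp [derivative_mul]

lemma sort3 (r s t : ℝ) : ∃ r' s' t' : ℝ, r' ≤ s' ∧ s' ≤ t' ∧
    (X - C r) * (X - C s) * (X - C t) = (X - C r') * (X - C s') * (X - C t' : Polynomial ℝ) := by
  rcases le_total r s with h | h <;> rcases le_total s t with h' | h' <;>
    rcases le_total r t with h'' | h''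
  · exact ⟨r, s, t, h, h', by ring⟩
  · exact ⟨r, s, t, h, h', by ring⟩
  · exact ⟨r, t, s, h'', h', by ring⟩
  · exact ⟨t, r, s, h'', h, by ring⟩
  · exact ⟨s, r, t, h, h'', by ring⟩
  · exact ⟨s, t, r, h', h'', by ring⟩
  · exact ⟨r, s, t, by linarith, by linarith, by ring⟩
  · exact ⟨t, s, r, h', h, by ring⟩

lemma hyp_splits_aux : ∀ n : ℕ, ∀ p : Polynomial ℝ, p.natDegree = n → Hyperbolic p →
    p.Splits := by
  intro n
  induction n using Nat.strong_induction_on with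
  | _ n ih =>
    intro p hn hp
    by_cases h1 : p.natDegree ≤ 1
    · exact Splits.of_natDegree_le_one h1
    · have hp0 : p ≠ 0 := fun h => by simp [h] at h1
      have hmap0 : p.map (algebraMap ℝ ℂ) ≠ 0 := by
        simpa using (Polynomial.map_ne_zero_iff
          (RingHom.injective (algebraMap ℝ ℂ))).mpr hp0
      have hdegmap : (p.map (algebraMap ℝ ℂ)).degree ≠ 0 := by
        rw [degree_map, degree_eq_natDegree hp0]
        intro h
        have : p.natDegree = 0 := by exact_mod_cast h
        omega
      obtain ⟨z, hz⟩ := IsAlgClosed.exists_root _ hdegmap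
      have him := hp z (mem_roots'.mpr ⟨hmap0, hz⟩)
      have hzr : z = ((z.re : ℝ) : ℂ) := Complex.ext rfl (by simp [him])
      have hroot : p.IsRoot z.re := by
        apply RingHom.injective (algebraMap ℝ ℂ)
        rw [map_zero, ← Polynomial.eval₂_at_apply]
        rw [← Polynomial.eval_map]
        show Polynomial.eval ((z.re : ℝ) : ℂ) _ = 0
        rw [← hzr]
        exact hz
      obtain ⟨q, hq⟩ := Polynomial.dvd_iff_isRoot.mpr hroot
      have hq0 : q ≠ 0 := by rintro rfl; rw [mul_zero] at hq; exact hp0 hq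
      have hqdeg : q.natDegree < n := by
        rw [hq, natDegree_mul (X_sub_C_ne_zero _) hq0, natDegree_X_sub_C] at hn
        omega
      have hqhyp : Hyperbolic q := by
        intro w hw
        apply hp
        rw [hq, Polynomial.map_mul,
          roots_mul (by rw [← Polynomial.map_mul, ← hq]; exact hmap0)]
        exact Multiset.mem_add.mpr (Or.inr hw)
      rw [hq]
      exact Splits.mul (Splits.X_sub_C _) (ih _ hqdeg q rfl hqhyp)

theorem stmt_12 (p : Polynomial ℝ) (hdeg : p.degree ≤ 3) (hp : Hyperbolic p) :
    ∃ P : Polynomial ℝ, derivative P = p ∧ Hyperbolic P := by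
  by_cases hp0 : p = 0
  · subst hp0
    exact ⟨0, by simp, fun z hz => by simp at hz⟩
  · have hsp := hyp_splits_aux p.natDegree p rfl hp
    have hcard : Multiset.card p.roots = p.natDegree := splits_iff_card_roots.mp hsp
    have hfact := Splits.eq_prod_roots hsp
    have hnd : p.natDegree ≤ 3 := natDegree_le_iff_degree_le.mpr hdeg
    set a := p.leadingCoeff with ha
    set n := p.natDegree with hn
    clear_value n
    interval_cases n
    · have hR := Multiset.card_eq_zero.mp hcard
      have hp' : p = C a := by rw [hfact, hR]; simp
      rw [hp']; exact ex0 a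
    · obtain ⟨r, hR⟩ := Multiset.card_eq_one.mp hcard
      have hp' : p = C a * (X - C r) := by rw [hfact, hR]; simp
      rw [hp']; exact ex1 a r
    · obtain ⟨r, s, hR⟩ := Multiset.card_eq_two.mp hcard
      have hp' : p = C a * ((X - C r) * (X - C s)) := by rw [hfact, hR]; simp
      rw [hp']; exact ex2 a r s
    · obtain ⟨r, s, t, hR⟩ := Multiset.card_eq_three.mp hcard
      obtain ⟨r', s', t', h1, h2, hperm⟩ := sort3 r s t
      have hp' : p = C a * ((X - C r') * (X - C s') * (X - C t')) := by
        rw [hfact, hR, ← hperm]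
        simp only [Multiset.insert_eq_cons, Multiset.map_cons, Multiset.map_singleton,
          Multiset.prod_cons, Multiset.prod_singleton]
        ring
      rw [hp']; exact ex3 a r' s' t' h1 h2
end

section
/- The polynomial p(x) = (x - 1)²(x - 4)² has no hyperbolic antiderivative: there is no real polynomial P with P' = p all of whose complex roots are real. -/
open Polynomial

theorem stmt_13 :
    ¬ ∃ P : Polynomial ℝ,
        derivative P = (X - C 1) ^ 2 * (X - C 4) ^ 2 ∧ Hyperbolic P := by
  rintro ⟨P, hP, hyp⟩
  set p : ℝ[X] := (X - C 1) ^ 2 * (X - C 4) ^ 2 with hp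
  have hpne : p ≠ 0 := by
    intro h
    have := congrArg (eval 0) h
    simp [hp] at this
  have hPne : P ≠ 0 := by
    intro h; rw [h] at hP; simp at hP; exact hpne hP.symm
  -- P is monotone since its derivative is a square
  have hmono : Monotone (fun x => P.eval x) := by
    apply monotone_of_deriv_nonneg (Polynomial.differentiable P)
    intro x
    rw [Polynomial.deriv, hP, hp]
    simp only [eval_mul, eval_pow, eval_sub, eval_X, eval_C]
    positivity
  -- real roots of P are unique
  have huniq : ∀ a b : ℝ, P.eval a = 0 → P.eval b = 0 → a = b := by
    intro a b ha hb
    by_contra hne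
    wlog hab : a < b generalizing a b
    · exact this b a hb ha (Ne.symm hne)
        (lt_of_le_of_ne (not_lt.1 hab) (Ne.symm hne))
    have hsub : Set.Icc a b ⊆ {x | P.IsRoot x} := by
      intro x hx
      have h1 := hmono hx.1
      have h2 := hmono hx.2
      simp only [IsRoot, Set.mem_setOf_eq]
      simp only [ha, hb] at h1 h2
      linarith
    exact hPne (Polynomial.eq_zero_of_infinite_isRoot P
      ((Set.Icc_infinite hab).mono hsub))
  -- degrees
  have hpdeg : p.natDegree = 4 := by
    rw [hp]; compute_degree!
  have hPdeg : P.natDegree = 5 := by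
    have hpos : 0 < P.natDegree := by
      by_contra h
      push_neg at h
      have : P = C (P.coeff 0) := Polynomial.eq_C_of_natDegree_eq_zero (Nat.le_zero.1 h)
      rw [this] at hP
      simp at hP
      exact hpne hP.symm
    have := Polynomial.degree_derivative_eq P hpos
    rw [hP] at this
    have h4 : p.degree = (4 : ℕ) := by
      rw [Polynomial.degree_eq_natDegree hpne, hpdeg]
    rw [h4] at this
    have : (4 : ℕ) = P.natDegree - 1 := by exact_mod_cast this
    omega
  set Q : ℂ[X] := P.map (algebraMap ℝ ℂ) with hQdef
  have hQne : Q ≠ 0 := by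
    simpa [hQdef, Polynomial.map_eq_zero_iff (algebraMap ℝ ℂ).injective] using hPne
  have hQdeg : Q.natDegree = 5 := by
    rw [hQdef, Polynomial.natDegree_map, hPdeg]
  have hsplits : Splits Q := IsAlgClosed.splits Q
  have hcard : Q.roots.card = 5 := by
    rw [Polynomial.splits_iff_card_roots.1 hsplits, hQdeg]
  -- roots of Q correspond to real roots of P
  have hroot : ∀ z ∈ Q.roots, P.eval z.re = 0 ∧ z.im = 0 := by
    intro z hz
    have him := hyp z hz
    have hz0 : Q.eval z = 0 := by
      have := Polynomial.isRoot_of_mem_roots hz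
      exact this
    have hzre : z = ((z.re : ℝ) : ℂ) := by
      exact Complex.ext rfl (by simp [him])
    rw [hzre] at hz0
    rw [hQdef, Polynomial.eval_map,
      show ((z.re : ℝ) : ℂ) = algebraMap ℝ ℂ z.re from rfl,
      Polynomial.eval₂_at_apply] at hz0
    constructor
    · have : ((eval z.re P : ℝ) : ℂ) = 0 := hz0
      exact_mod_cast this
    · exact him
  -- all roots are equal
  obtain ⟨z₀, hz₀⟩ : ∃ z, z ∈ Q.roots := by
    rcases Multiset.card_pos_iff_exists_mem.1 (by rw [hcard]; norm_num) with ⟨z, hz⟩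
    exact ⟨z, hz⟩
  have hall : ∀ z ∈ Q.roots, z = z₀ := by
    intro z hz
    obtain ⟨h1, h2⟩ := hroot z hz
    obtain ⟨h3, h4⟩ := hroot z₀ hz₀
    have := huniq z.re z₀.re h1 h3
    exact Complex.ext this (by rw [h2, h4])
  have hrep : Q.roots = Multiset.replicate 5 z₀ := by
    rw [Multiset.eq_replicate]
    exact ⟨hcard, hall⟩
  have hQeq : Q = C Q.leadingCoeff * (X - C z₀) ^ 5 := by
    have := hsplits.eq_prod_roots
    rw [hrep, Multiset.map_replicate, Multiset.prod_replicate] at this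
    exact this
  have hlc : Q.leadingCoeff ≠ 0 := Polynomial.leadingCoeff_ne_zero.2 hQne
  -- derivative of Q is the image of p
  have hder : derivative Q = p.map (algebraMap ℝ ℂ) := by
    rw [hQdef, Polynomial.derivative_map, hP]
  have heval : ∀ x : ℂ, eval x (derivative Q) =
      Q.leadingCoeff * (5 * (x - z₀) ^ 4) := by
    intro x
    rw [hQeq]
    simp [derivative_mul, derivative_pow]
  have h1 : eval 1 (derivative Q) = 0 := by
    rw [hder, hp]
    simp
  have h4 : eval 4 (derivative Q) = 0 := by
    rw [hder, hp]
    simp [sub_self]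
  rw [heval] at h1 h4
  have e1 : ((1 : ℂ) - z₀) ^ 4 = 0 := by
    rcases mul_eq_zero.1 h1 with h | h
    · exact absurd h hlc
    · rcases mul_eq_zero.1 h with h | h
      · norm_num at h
      · exact h
  have e4 : ((4 : ℂ) - z₀) ^ 4 = 0 := by
    rcases mul_eq_zero.1 h4 with h | h
    · exact absurd h hlc
    · rcases mul_eq_zero.1 h with h | h
      · norm_num at h
      · exact h
  have z1 : z₀ = 1 := by
    have := pow_eq_zero_iff (n := 4) (by norm_num) |>.1 e1
    linear_combination -this
  have z4 : z₀ = 4 := by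
    have := pow_eq_zero_iff (n := 4) (by norm_num) |>.1 e4
    linear_combination -this
  rw [z1] at z4
  norm_num at z4
end
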